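/- arXiv:1702.02899 — 3 statements merged into one kernel-verified Lean document; each statement's English description precedes it below -/
import Mathlib

section
/- Let G be a finite group generated by its set of left Engel elements. Then G is nilpotent. -/
open Subgroup

open scoped commutatorElement

namespace BaerZip

variable {G : Type*} [Group G]

/-- Conjugate of a subgroup. -/
def cnj (g : G) (S : Subgroup G) : Subgroup G := S.map (MulAut.conj g).toMonoidHom

lemma mem_cnj {g a : G} {S : Subgroup G} : a ∈ cnj g S ↔ g⁻¹ * a * g ∈ S := by
  constructor
  · rintro ⟨s, hs, rfl⟩
    simpa [MulAut.conj_apply, mul_assoc] using hs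
  · intro h
    exact ⟨g⁻¹ * a * g, h, by simp [MulAut.conj_apply, mul_assoc]⟩

lemma cnj_cnj (a b : G) (S : Subgroup G) : cnj a (cnj b S) = cnj (a * b) S := by
  ext x
  rw [mem_cnj, mem_cnj, mem_cnj]
  have h : b⁻¹ * (a⁻¹ * x * a) * b = (a * b)⁻¹ * x * (a * b) := by group
  rw [h]

lemma cnj_one (S : Subgroup G) : cnj 1 S = S := by
  ext x; simp [mem_cnj]

lemma cnj_mono {S T : Subgroup G} (g : G) (h : S ≤ T) : cnj g S ≤ cnj g T := by
  intro x hx; rw [mem_cnj] at *; exact h hx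

lemma cnj_le_iff {g : G} {S T : Subgroup G} : cnj g S ≤ T ↔ S ≤ cnj g⁻¹ T := by
  constructor
  · intro h
    have := cnj_mono g⁻¹ h
    rwa [cnj_cnj, inv_mul_cancel, cnj_one] at this
  · intro h
    have := cnj_mono g h
    rwa [cnj_cnj, mul_inv_cancel, cnj_one] at this

lemma cnj_inj {g : G} {S T : Subgroup G} (h : cnj g S = cnj g T) : S = T := by
  have := congrArg (cnj g⁻¹) h
  rwa [cnj_cnj, cnj_cnj, inv_mul_cancel, cnj_one, cnj_one] at this

lemma cnj_sup (g : G) (S T : Subgroup G) : cnj g (S ⊔ T) = cnj g S ⊔ cnj g T :=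
  Subgroup.map_sup _ _ _

lemma cnj_iSup {ι : Sort*} (g : G) (f : ι → Subgroup G) :
    cnj g (⨆ i, f i) = ⨆ i, cnj g (f i) :=
  Subgroup.map_iSup _ _

lemma cnj_inf (g : G) (S T : Subgroup G) : cnj g (S ⊓ T) = cnj g S ⊓ cnj g T := by
  ext x; simp [mem_cnj]

lemma cnj_bot (g : G) : cnj g (⊥ : Subgroup G) = ⊥ := by
  ext x
  rw [mem_cnj, Subgroup.mem_bot, Subgroup.mem_bot]
  constructor
  · intro h
    have : g * (g⁻¹ * x * g) * g⁻¹ = g * 1 * g⁻¹ := by rw [h]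
    simpa [mul_assoc] using this
  · intro h; simp [h]

lemma cnj_lt {g : G} {S T : Subgroup G} (h : S < T) : cnj g S < cnj g T :=
  lt_of_le_of_ne (cnj_mono g h.le) (fun e => h.ne (cnj_inj e))

lemma card_cnj (g : G) (S : Subgroup G) : Nat.card (cnj g S) = Nat.card S :=
  (Nat.card_congr (S.equivMapOfInjective _ (MulAut.conj g).injective).toEquiv).symm

lemma cnj_eq_iff_mem_normalizer {g : G} {S : Subgroup G} :
    cnj g S = S ↔ g ∈ Subgroup.normalizer ((S : Subgroup G) : Set G) := by
  rw [Subgroup.mem_normalizer_iff]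
  constructor
  · intro h n
    constructor
    · intro hn
      rw [← h, mem_cnj]
      simpa [mul_assoc] using hn
    · intro hn
      rw [← h, mem_cnj] at hn
      simpa [mul_assoc] using hn
  · intro h
    ext a
    rw [mem_cnj]
    rw [h (g⁻¹ * a * g)]
    have h2 : g * (g⁻¹ * a * g) * g⁻¹ = a := by group
    rw [h2]

lemma cnj_eq_of_mem {g : G} {S : Subgroup G} (h : g ∈ S) : cnj g S = S :=
  cnj_eq_iff_mem_normalizer.2 (Subgroup.le_normalizer h)

lemma cnj_closure_singleton (g x : G) :
    cnj g (Subgroup.closure {x}) = Subgroup.closure {g * x * g⁻¹} := by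
  unfold cnj
  rw [MonoidHom.map_closure]
  congr 1
  simp [MulAut.conj_apply]

lemma mem_of_cnj_mem {g s : G} {S : Subgroup G} (h : cnj g S = S) (hs : s ∈ S) :
    g * s * g⁻¹ ∈ S := by
  rw [← h, mem_cnj]
  simpa [mul_assoc] using hs

section Finite
variable [Finite G]

set_option linter.unusedSectionVars false


lemma card_coe_set (A : Subgroup G) : Nat.card A = ((A : Set G)).ncard := by
  rw [← Nat.card_coe_set_eq]; rfl

lemma eq_of_le_of_card_le {A B : Subgroup G} (h : A ≤ B) (hc : Nat.card B ≤ Nat.card A) :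
    A = B := by
  apply SetLike.coe_injective
  apply Set.eq_of_subset_of_ncard_le h
  rw [card_coe_set, card_coe_set] at hc; exact hc

lemma card_lt_of_lt {A B : Subgroup G} (h : A < B) : Nat.card A < Nat.card B := by
  rw [card_coe_set, card_coe_set]
  exact Set.ncard_lt_ncard (by exact_mod_cast h) (Set.toFinite _)

lemma cnj_eq_of_le {g : G} {S : Subgroup G} (h : cnj g S ≤ S) : cnj g S = S :=
  eq_of_le_of_card_le h (by rw [card_cnj])

end Finite

end BaerZip
set_option maxHeartbeats 1000000

namespace BaerZip

variable {G : Type*} [Group G]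

/-- `S` is normal in `T` (as subgroups of an ambient group `G`). -/
def NormalIn (T S : Subgroup G) : Prop := S ≤ T ∧ ∀ g ∈ T, cnj g S = S

lemma NormalIn.le {T S : Subgroup G} (h : NormalIn T S) : S ≤ T := h.1

lemma normalIn_refl (T : Subgroup G) : NormalIn T T :=
  ⟨le_rfl, fun _ hg => cnj_eq_of_mem hg⟩

lemma normalIn_bot (T : Subgroup G) : NormalIn T ⊥ :=
  ⟨bot_le, fun g _ => cnj_bot g⟩

lemma NormalIn.mono_left {T T' S : Subgroup G} (h : NormalIn T S) (h1 : S ≤ T') (h2 : T' ≤ T) :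
    NormalIn T' S :=
  ⟨h1, fun g hg => h.2 g (h2 hg)⟩

lemma NormalIn.inf {T A B : Subgroup G} (hA : NormalIn T A) (hB : NormalIn T B) :
    NormalIn T (A ⊓ B) :=
  ⟨le_trans inf_le_left hA.le, fun g hg => by rw [cnj_inf, hA.2 g hg, hB.2 g hg]⟩

lemma NormalIn.conj_mem {T S : Subgroup G} (h : NormalIn T S) {g s : G}
    (hg : g ∈ T) (hs : s ∈ S) : g * s * g⁻¹ ∈ S :=
  mem_of_cnj_mem (h.2 g hg) hs

lemma normalIn_top_iff {S : Subgroup G} : NormalIn ⊤ S ↔ S.Normal := by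
  constructor
  · intro h
    exact ⟨fun n hn g => h.conj_mem (Subgroup.mem_top g) hn⟩
  · intro h
    refine ⟨le_top, fun g _ => ?_⟩
    apply le_antisymm
    · intro x hx
      rw [mem_cnj] at hx
      have := h.conj_mem _ hx g
      have e : g * (g⁻¹ * x * g) * g⁻¹ = x := by group
      rwa [e] at this
    · intro x hx
      rw [mem_cnj]
      have := h.conj_mem _ hx g⁻¹
      simpa [mul_assoc] using this

lemma NormalIn.cnj {T S : Subgroup G} (h : NormalIn T S) (a : G) :
    NormalIn (BaerZip.cnj a T) (BaerZip.cnj a S) := by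
  refine ⟨cnj_mono a h.le, fun g hg => ?_⟩
  rw [mem_cnj] at hg
  rw [cnj_cnj]
  have : g * a = a * (a⁻¹ * g * a) := by group
  rw [this, ← cnj_cnj]
  rw [h.2 _ hg]

lemma le_normalizer_iff_cnj {V S : Subgroup G} :
    V ≤ Subgroup.normalizer ((S : Subgroup G) : Set G) ↔ ∀ g ∈ V, cnj g S = S := by
  constructor
  · intro h g hg
    exact cnj_eq_iff_mem_normalizer.2 (h hg)
  · intro h g hg
    exact cnj_eq_iff_mem_normalizer.1 (h g hg)

lemma sup_le_normalizer {A V : Subgroup G} (hV : V ≤ Subgroup.normalizer ((A : Subgroup G) : Set G)) : A ⊔ V ≤ Subgroup.normalizer ((A : Subgroup G) : Set G) :=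
  sup_le Subgroup.le_normalizer hV

lemma normalizer_sup_of_le {A B V : Subgroup G} (hA : V ≤ Subgroup.normalizer ((A : Subgroup G) : Set G))
    (hB : V ≤ Subgroup.normalizer ((B : Subgroup G) : Set G)) : V ≤ Subgroup.normalizer ((A ⊔ B : Subgroup G) : Set G) := by
  rw [le_normalizer_iff_cnj] at *
  intro g hg
  rw [cnj_sup, hA g hg, hB g hg]

/-- Subnormality inside the lattice of subgroups of `G`. -/
inductive SubnormalIn : Subgroup G → Subgroup G → Prop
  | refl (T : Subgroup G) : SubnormalIn T T
  | cons {T U S : Subgroup G} (h1 : SubnormalIn T U) (h2 : NormalIn U S) : SubnormalIn T S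

lemma SubnormalIn.le {T S : Subgroup G} (h : SubnormalIn T S) : S ≤ T := by
  induction h with
  | refl => exact le_rfl
  | cons h1 h2 ih => exact le_trans h2.le ih

lemma SubnormalIn.of_normalIn {T S : Subgroup G} (h : NormalIn T S) : SubnormalIn T S :=
  SubnormalIn.cons (SubnormalIn.refl T) h

lemma SubnormalIn.bot (T : Subgroup G) : SubnormalIn T ⊥ :=
  SubnormalIn.of_normalIn (normalIn_bot T)

lemma SubnormalIn.trans {T U S : Subgroup G} (h1 : SubnormalIn T U) (h2 : SubnormalIn U S) :
    SubnormalIn T S := by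
  induction h2 with
  | refl => exact h1
  | cons ha hb ih => exact SubnormalIn.cons ih hb

lemma SubnormalIn.inf_right {X Y : Subgroup G} (h : SubnormalIn X Y) (L : Subgroup G) :
    SubnormalIn (X ⊓ L) (Y ⊓ L) := by
  induction h with
  | refl => exact SubnormalIn.refl _
  | @cons U' S' h1' h2' ih =>
      refine SubnormalIn.cons ih ⟨inf_le_inf_right L h2'.le, ?_⟩
      intro g hg
      apply le_antisymm
      · intro x hx
        rw [mem_cnj] at hx
        have hgU : g ∈ U' := (inf_le_left : U' ⊓ L ≤ U') hg
        have hgL : g ∈ L := (inf_le_right : U' ⊓ L ≤ L) hg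
        have hx1 : g⁻¹ * x * g ∈ S' := hx.1
        have hx2 : g⁻¹ * x * g ∈ L := hx.2
        constructor
        · have := h2'.conj_mem hgU hx1
          have e : g * (g⁻¹ * x * g) * g⁻¹ = x := by group
          rwa [e] at this
        · have := mul_mem (mul_mem hgL hx2) (inv_mem hgL)
          have e : g * (g⁻¹ * x * g) * g⁻¹ = x := by group
          rwa [e] at this
      · intro x hx
        rw [mem_cnj]
        have hgU : g ∈ U' := (inf_le_left : U' ⊓ L ≤ U') hg
        have hgL : g ∈ L := (inf_le_right : U' ⊓ L ≤ L) hg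
        constructor
        · have := h2'.conj_mem (inv_mem hgU) hx.1
          simpa [mul_assoc] using this
        · have := mul_mem (mul_mem (inv_mem hgL) hx.2) hgL
          simpa [mul_assoc] using this

lemma SubnormalIn.within {T S L : Subgroup G} (h : SubnormalIn T S) (h1 : S ≤ L) (h2 : L ≤ T) :
    SubnormalIn L S := by
  have := h.inf_right L
  rwa [inf_eq_right.2 h2, inf_eq_left.2 h1] at this

lemma SubnormalIn.cnj {T S : Subgroup G} (h : SubnormalIn T S) (a : G) :
    SubnormalIn (BaerZip.cnj a T) (BaerZip.cnj a S) := by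
  induction h with
  | refl => exact SubnormalIn.refl _
  | cons h1 h2 ih => exact SubnormalIn.cons ih (h2.cnj a)

lemma SubnormalIn.exists_normalIn {T S : Subgroup G} (h : SubnormalIn T S) :
    S = T ∨ ∃ U, NormalIn T U ∧ S ≤ U ∧ U ≠ T := by
  induction h with
  | refl => exact Or.inl rfl
  | @cons U' S' h1' h2' ih =>
      rcases ih with rfl | ⟨U₁, hU₁, hle, hne⟩
      · by_cases hS : S' = U'
        · exact Or.inl hS
        · exact Or.inr ⟨S', h2', le_rfl, hS⟩
      · exact Or.inr ⟨U₁, hU₁, le_trans h2'.le hle, hne⟩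

/-- Normal closure of `S` under conjugation by elements of `T`. -/
def ncIn (T S : Subgroup G) : Subgroup G := ⨆ g : T, cnj (g : G) S

lemma le_ncIn (T S : Subgroup G) : S ≤ ncIn T S := by
  have := le_iSup (fun g : T => cnj (g : G) S) ⟨1, one_mem T⟩
  rwa [cnj_one] at this

lemma cnj_le_ncIn {T S : Subgroup G} {g : G} (hg : g ∈ T) : cnj g S ≤ ncIn T S :=
  le_iSup (fun g : T => cnj (g : G) S) ⟨g, hg⟩

lemma ncIn_le {T S U : Subgroup G} (hU : NormalIn T U) (hS : S ≤ U) : ncIn T S ≤ U := by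
  apply iSup_le
  rintro ⟨g, hg⟩
  rw [← hU.2 g hg]
  exact cnj_mono g hS

lemma ncIn_le_self {T S : Subgroup G} (h : S ≤ T) : ncIn T S ≤ T :=
  ncIn_le (normalIn_refl T) h

lemma normalIn_ncIn {T S : Subgroup G} (h : S ≤ T) : NormalIn T (ncIn T S) := by
  refine ⟨ncIn_le_self h, fun g hg => ?_⟩
  have key : ∀ a ∈ T, cnj a (ncIn T S) ≤ ncIn T S := by
    intro a ha
    rw [ncIn, cnj_iSup]
    apply iSup_le
    rintro ⟨b, hb⟩
    rw [cnj_cnj]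
    exact cnj_le_ncIn (mul_mem ha hb)
  apply le_antisymm (key g hg)
  have h2 := key g⁻¹ (inv_mem hg)
  have := cnj_mono g h2
  rwa [cnj_cnj, mul_inv_cancel, cnj_one] at this

lemma le_normalizer_of_ncIn_eq {T S : Subgroup G} (h : ncIn T S = S) : T ≤ Subgroup.normalizer ((S : Subgroup G) : Set G) := by
  intro g hg
  apply cnj_eq_iff_mem_normalizer.1
  have h1 : cnj g S ≤ S := by
    have := cnj_le_ncIn (S := S) hg
    rwa [h] at this
  apply le_antisymm h1
  have h2 : cnj g⁻¹ S ≤ S := by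
    have := cnj_le_ncIn (S := S) (inv_mem hg)
    rwa [h] at this
  have := cnj_mono g h2
  rwa [cnj_cnj, mul_inv_cancel, cnj_one] at this

lemma SubnormalIn.eq_of_ncIn_eq {T S : Subgroup G} (h : SubnormalIn T S)
    (hfull : ncIn T S = T) : S = T := by
  rcases h.exists_normalIn with h1 | ⟨U, hU, hle, hne⟩
  · exact h1
  · exfalso
    apply hne
    apply le_antisymm hU.le
    rw [← hfull]
    exact ncIn_le hU hle

end BaerZip
namespace BaerZip

variable {G : Type*} [Group G]

lemma finite_exists_maximal_wrt {α β : Type*} [PartialOrder β] (f : α → β) (s : Set α)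
    (h : s.Finite) (hs : s.Nonempty) : ∃ a ∈ s, ∀ a' ∈ s, f a ≤ f a' → f a = f a' := by
  obtain ⟨a, ha, hmax⟩ := h.exists_maximalFor f s hs
  exact ⟨a, ha, fun a' ha' hle => le_antisymm hle (hmax ha' hle)⟩

lemma finite_exists_minimal_wrt {α β : Type*} [PartialOrder β] (f : α → β) (s : Set α)
    (h : s.Finite) (hs : s.Nonempty) : ∃ a ∈ s, ∀ a' ∈ s, f a' ≤ f a → f a = f a' := by
  obtain ⟨a, ha, hmin⟩ := h.exists_minimalFor f s hs
  exact ⟨a, ha, fun a' ha' hle => le_antisymm (hmin ha' hle) hle⟩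

instance [Finite G] : Finite (Subgroup G) :=
  Finite.of_injective (fun H => (H : Set G)) SetLike.coe_injective

/-- `M` is a maximal proper subgroup of `T`. -/
def IsMaxIn (T M : Subgroup G) : Prop := M < T ∧ ∀ P, M < P → P ≤ T → P = T

lemma exists_maxIn [Finite G] {S T : Subgroup G} (h : S < T) : ∃ M, S ≤ M ∧ IsMaxIn T M := by
  obtain ⟨M, hM, hmax⟩ := finite_exists_maximal_wrt id {P : Subgroup G | S ≤ P ∧ P < T}
    (Set.toFinite _) ⟨S, le_rfl, h⟩
  refine ⟨M, hM.1, hM.2, ?_⟩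
  intro P hMP hPT
  by_contra hne
  have hPlt : P < T := lt_of_le_of_ne hPT hne
  have := hmax P ⟨le_trans hM.1 hMP.le, hPlt⟩ hMP.le
  exact hMP.ne this

lemma IsMaxIn.cnj_of_mem {T M : Subgroup G} (h : IsMaxIn T M) {a : G} (ha : a ∈ T) :
    IsMaxIn T (cnj a M) := by
  have hTa : cnj a T = T := cnj_eq_of_mem ha
  constructor
  · have := cnj_lt (g := a) h.1
    rwa [hTa] at this
  · intro P hMP hPT
    have h1 : M < cnj a⁻¹ P := by
      have := cnj_lt (g := a⁻¹) hMP
      rwa [cnj_cnj, inv_mul_cancel, cnj_one] at this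
    have h2 : cnj a⁻¹ P ≤ T := by
      have h' := cnj_mono a⁻¹ hPT
      rwa [show cnj a⁻¹ T = T from cnj_eq_of_mem (inv_mem ha)] at h' 
    have := h.2 _ h1 h2
    have := congrArg (cnj a) this
    rwa [cnj_cnj, mul_inv_cancel, cnj_one, hTa] at this

lemma exists_minNormalIn [Finite G] {T V₀ : Subgroup G} (h : V₀ < T) :
    ∃ V, NormalIn T V ∧ V₀ < V ∧ ∀ U, NormalIn T U → V₀ < U → U ≤ V → U = V := by
  obtain ⟨V, hV, hmin⟩ := finite_exists_minimal_wrt id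
    {U : Subgroup G | NormalIn T U ∧ V₀ < U} (Set.toFinite _) ⟨T, normalIn_refl T, h⟩
  exact ⟨V, hV.1, hV.2, fun U hU h1 h2 => (hmin U ⟨hU, h1⟩ h2).symm⟩

/-- Based minimal-normal lemma: a subgroup `V` that is minimal among
`NormalIn T` subgroups strictly above the base `V₀` normalizes every
subnormal subgroup of `T` containing `V₀`. -/
lemma lemmaW [Finite G] : ∀ n : ℕ, ∀ T V₀ V A : Subgroup G, Nat.card T ≤ n →
    NormalIn T V₀ → NormalIn T V → V₀ < V →
    (∀ U, NormalIn T U → V₀ < U → U ≤ V → U = V) →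
    V₀ ≤ A → SubnormalIn T A → V ≤ Subgroup.normalizer ((A : Subgroup G) : Set G) := by
  intro n
  induction n with
  | zero =>
      intro T V₀ V A hcard
      have := Nat.card_pos (α := T)
      omega
  | succ n ihn =>
      intro T V₀ V A hcard hV₀ hV hlt hmin hA hsub
      have hAT : A ≤ T := hsub.le
      by_cases hfull : ncIn T A = T
      · have hAeq : A = T := hsub.eq_of_ncIn_eq hfull
        rw [hAeq]
        exact le_trans hV.le Subgroup.le_normalizer
      · set A₁ := ncIn T A with hA₁def
        have hA₁T : A₁ ≤ T := ncIn_le_self hAT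
        have hA₁lt : A₁ < T := lt_of_le_of_ne hA₁T hfull
        have hnormA₁ : NormalIn T A₁ := normalIn_ncIn hAT
        have hAA₁ : A ≤ A₁ := le_ncIn T A
        have hUnorm : NormalIn T (V ⊓ A₁) := hV.inf hnormA₁
        have hV₀U : V₀ ≤ V ⊓ A₁ := le_inf hlt.le (le_trans hA hAA₁)
        rcases hV₀U.lt_or_eq with hcase | hcase
        · -- V ⊓ A₁ = V, so V ≤ A₁
          have hVA₁ : V ≤ A₁ := by
            have heq := hmin _ hUnorm hcase inf_le_left
            rw [← heq]
            exact inf_le_right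
          set Ufam := {U' : Subgroup G | NormalIn A₁ U' ∧ V₀ < U' ∧ U' ≤ V ∧
            ∀ U'', NormalIn A₁ U'' → V₀ < U'' → U'' ≤ U' → U'' = U'} with hUfam
          have hVnormA₁ : NormalIn A₁ V := hV.mono_left hVA₁ hA₁T
          have hV₀normA₁ : NormalIn A₁ V₀ := hV₀.mono_left (le_trans hA hAA₁) hA₁T
          obtain ⟨U₀, hU₀mem, hU₀min⟩ := finite_exists_minimal_wrt id
            {U'' : Subgroup G | NormalIn A₁ U'' ∧ V₀ < U'' ∧ U'' ≤ V} (Set.toFinite _)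
            ⟨V, hVnormA₁, hlt, le_rfl⟩
          have hU₀ : U₀ ∈ Ufam := by
            refine ⟨hU₀mem.1, hU₀mem.2.1, hU₀mem.2.2, ?_⟩
            intro U'' h1 h2 h3
            exact (hU₀min U'' ⟨h1, h2, le_trans h3 hU₀mem.2.2⟩ h3).symm
          have himg : ∀ g ∈ T, ∀ U' ∈ Ufam, cnj g U' ∈ Ufam := by
            intro g hg U' hU'
            obtain ⟨h1, h2, h3, h4⟩ := hU'
            refine ⟨?_, ?_, ?_, ?_⟩
            · have := h1.cnj g
              rwa [hnormA₁.2 g hg] at this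
            · have := cnj_lt (g := g) h2
              rwa [hV₀.2 g hg] at this
            · have := cnj_mono g h3
              rwa [hV.2 g hg] at this
            · intro U'' n1 n2 n3
              have m1 : NormalIn A₁ (cnj g⁻¹ U'') := by
                have := n1.cnj g⁻¹
                rwa [hnormA₁.2 g⁻¹ (inv_mem hg)] at this
              have m2 : V₀ < cnj g⁻¹ U'' := by
                have := cnj_lt (g := g⁻¹) n2
                rwa [hV₀.2 g⁻¹ (inv_mem hg)] at this
              have m3 : cnj g⁻¹ U'' ≤ U' := by
                have := cnj_mono g⁻¹ n3
                rwa [cnj_cnj, inv_mul_cancel, cnj_one] at this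
              have heq := h4 _ m1 m2 m3
              have := congrArg (cnj g) heq
              rwa [cnj_cnj, mul_inv_cancel, cnj_one] at this
          set W := sSup Ufam with hW
          have hWle : W ≤ V := sSup_le (fun U' hU' => hU'.2.2.1)
          have hWnorm : NormalIn T W := by
            refine ⟨le_trans hWle hV.le, ?_⟩
            intro g hg
            apply cnj_eq_of_le
            have hcalc : cnj g W = ⨆ U' : Ufam, cnj g (U' : Subgroup G) := by
              rw [hW, sSup_eq_iSup', cnj_iSup]
            rw [hcalc]
            apply iSup_le
            rintro ⟨U', hU'⟩
            rw [hW]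
            exact le_sSup (himg g hg U' hU')
          have hWgt : V₀ < W := lt_of_lt_of_le hU₀.2.1 (le_sSup hU₀)
          have hWV : W = V := hmin W hWnorm hWgt hWle
          rw [← hWV, hW]
          apply sSup_le
          intro U' hU'
          have hcardA₁ : Nat.card A₁ ≤ n := by
            have := card_lt_of_lt hA₁lt
            omega
          exact ihn A₁ V₀ U' A hcardA₁ hV₀normA₁ hU'.1 hU'.2.1 hU'.2.2.2 hA
            (hsub.within hAA₁ hA₁T)
        · -- V ⊓ A₁ = V₀ : commutator argument
          rw [le_normalizer_iff_cnj]
          intro v hv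
          have key : ∀ w ∈ V, ∀ a ∈ A, w * a * w⁻¹ ∈ A := by
            intro w hw a ha
            have hwT : w ∈ T := hV.le hw
            have haT : a ∈ T := hAT ha
            have hc1 : w * a * w⁻¹ * a⁻¹ ∈ A₁ :=
              mul_mem (hnormA₁.conj_mem hwT (hAA₁ ha)) (inv_mem (hAA₁ ha))
            have hc2 : w * a * w⁻¹ * a⁻¹ ∈ V := by
              have h5 : a * w⁻¹ * a⁻¹ ∈ V := hV.conj_mem haT (inv_mem hw)
              have := mul_mem hw h5
              have e : w * (a * w⁻¹ * a⁻¹) = w * a * w⁻¹ * a⁻¹ := by group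
              rwa [e] at this
            have hcV₀ : w * a * w⁻¹ * a⁻¹ ∈ V₀ := by
              rw [hcase]
              exact ⟨hc2, hc1⟩
            have := mul_mem (hA hcV₀) ha
            have e : w * a * w⁻¹ * a⁻¹ * a = w * a * w⁻¹ := by group
            rwa [e] at this
          apply cnj_eq_of_le
          intro x hx
          rw [mem_cnj] at hx
          have := key v hv _ hx
          have e : v * (v⁻¹ * x * v) * v⁻¹ = x := by group
          rwa [e] at this

lemma SubnormalIn.sup_normalIn [Finite G] {T A V : Subgroup G} (h : SubnormalIn T A)
    (hV : NormalIn T V) : SubnormalIn T (A ⊔ V) := by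
  induction h with
  | refl => rw [sup_eq_left.2 hV.le]; exact SubnormalIn.refl T
  | @cons U' S' h1' h2' ih =>
      refine SubnormalIn.cons ih ⟨sup_le_sup_right h2'.le V, ?_⟩
      have hnorm : U' ⊔ V ≤ Subgroup.normalizer ((S' ⊔ V : Subgroup G) : Set G) := by
        apply sup_le
        · intro u hu
          apply cnj_eq_iff_mem_normalizer.1
          rw [cnj_sup, h2'.2 u hu, hV.2 u (h1'.le hu)]
        · intro v hvV
          apply cnj_eq_iff_mem_normalizer.1
          apply cnj_eq_of_le
          rw [cnj_sup]
          apply sup_le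
          · intro x hx
            rw [mem_cnj] at hx
            have hsT : v⁻¹ * x * v ∈ T := h1'.le (h2'.le hx)
            have hc : (v⁻¹ * x * v) * v⁻¹ * (v⁻¹ * x * v)⁻¹ ∈ V :=
              hV.conj_mem hsT (inv_mem hvV)
            have hfac : x = (v * ((v⁻¹ * x * v) * v⁻¹ * (v⁻¹ * x * v)⁻¹)) * (v⁻¹ * x * v) := by
              group
            rw [hfac]
            exact mul_mem ((le_sup_right : V ≤ S' ⊔ V) (mul_mem hvV hc))
              ((le_sup_left : S' ≤ S' ⊔ V) hx)
          · rw [hV.2 v (hV.le hvV)]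
            exact le_sup_right
      intro g hg
      exact cnj_eq_iff_mem_normalizer.2 (hnorm hg)

lemma joinBased [Finite G] : ∀ d : ℕ, ∀ T V₀ A B : Subgroup G,
    Nat.card T - Nat.card V₀ ≤ d →
    NormalIn T V₀ → V₀ ≤ A → V₀ ≤ B →
    SubnormalIn T A → SubnormalIn T B → SubnormalIn T (A ⊔ B) := by
  intro d
  induction d with
  | zero =>
      intro T V₀ A B hd h1 h2 h3 hA hB
      have hVT : V₀ = T := by
        apply eq_of_le_of_card_le h1.le
        omega
      have hsup : A ⊔ B = T :=
        le_antisymm (sup_le hA.le hB.le) (le_trans (hVT ▸ h2) le_sup_left)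
      rw [hsup]
      exact SubnormalIn.refl T
  | succ d ih =>
      intro T V₀ A B hd h1 h2 h3 hA hB
      by_cases htriv : V₀ = T
      · have hsup : A ⊔ B = T :=
          le_antisymm (sup_le hA.le hB.le) (le_trans (htriv ▸ h2) le_sup_left)
        rw [hsup]
        exact SubnormalIn.refl T
      · have hV₀T : V₀ < T := lt_of_le_of_ne h1.le htriv
        obtain ⟨V, hVnorm, hVgt, hVmin⟩ := exists_minNormalIn hV₀T
        have hVA : V ≤ Subgroup.normalizer ((A : Subgroup G) : Set G) :=
          lemmaW (Nat.card T) T V₀ V A le_rfl h1 hVnorm hVgt hVmin h2 hA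
        have hVB : V ≤ Subgroup.normalizer ((B : Subgroup G) : Set G) :=
          lemmaW (Nat.card T) T V₀ V B le_rfl h1 hVnorm hVgt hVmin h3 hB
        have hVJ : V ≤ Subgroup.normalizer ((A ⊔ B : Subgroup G) : Set G) := normalizer_sup_of_le hVA hVB
        have hA' : SubnormalIn T (A ⊔ V) := hA.sup_normalIn hVnorm
        have hB' : SubnormalIn T (B ⊔ V) := hB.sup_normalIn hVnorm
        have hrec : SubnormalIn T ((A ⊔ V) ⊔ (B ⊔ V)) := by
          apply ih T V (A ⊔ V) (B ⊔ V) ?_ hVnorm le_sup_right le_sup_right hA' hB'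
          have := card_lt_of_lt hVgt
          omega
        have heq : (A ⊔ V) ⊔ (B ⊔ V) = (A ⊔ B) ⊔ V := by
          rw [sup_sup_sup_comm, sup_idem]
        rw [heq] at hrec
        refine SubnormalIn.cons hrec ⟨le_sup_left, ?_⟩
        intro g hg
        have hle : (A ⊔ B) ⊔ V ≤ Subgroup.normalizer ((A ⊔ B : Subgroup G) : Set G) := sup_le Subgroup.le_normalizer hVJ
        exact cnj_eq_iff_mem_normalizer.2 (hle hg)

lemma SubnormalIn.join [Finite G] {T A B : Subgroup G} (hA : SubnormalIn T A)
    (hB : SubnormalIn T B) : SubnormalIn T (A ⊔ B) :=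
  joinBased (Nat.card T - Nat.card (⊥ : Subgroup G)) T ⊥ A B le_rfl (normalIn_bot T)
    bot_le bot_le hA hB

lemma subnormalIn_sSup [Finite G] {T : Subgroup G} (s : Set (Subgroup G))
    (h : ∀ X ∈ s, SubnormalIn T X) : SubnormalIn T (sSup s) := by
  have H : ∀ s : Set (Subgroup G), s.Finite →
      (∀ X ∈ s, SubnormalIn T X) → SubnormalIn T (sSup s) := by
    intro s hs
    refine Set.Finite.induction_on s hs ?_ ?_
    · intro _
      rw [sSup_empty]
      exact SubnormalIn.bot T
    · intro a s' _ _ ihs hmem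
      rw [sSup_insert]
      exact (hmem _ (Set.mem_insert _ _)).join
        (ihs (fun X hX => hmem X (Set.mem_insert_of_mem _ hX)))
  exact H s (Set.toFinite s) h

lemma subnormalIn_iSup [Finite G] {T : Subgroup G} {ι : Sort*} (f : ι → Subgroup G)
    (h : ∀ i, SubnormalIn T (f i)) : SubnormalIn T (⨆ i, f i) := by
  rw [← sSup_range]
  apply subnormalIn_sSup
  rintro X ⟨i, rfl⟩
  exact h i

end BaerZip
namespace BaerZip

variable {G : Type*} [Group G]

lemma conj_subnormal_of_A [Finite G] {T S K' : Subgroup G} {c : G}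
    (hA : ∀ K, S ≤ K → K < T → SubnormalIn K S) (hc : c ∈ T)
    (hle : cnj c S ≤ K') (hK' : K' < T) : SubnormalIn K' (cnj c S) := by
  have hTc : cnj c⁻¹ T = T := cnj_eq_of_mem (inv_mem hc)
  have h1 : S ≤ cnj c⁻¹ K' := cnj_le_iff.1 hle
  have h2 : cnj c⁻¹ K' < T := by
    have := cnj_lt (g := c⁻¹) hK'
    rwa [hTc] at this
  have h3 : SubnormalIn (cnj c⁻¹ K') S := hA _ h1 h2
  have h4 := h3.cnj c
  rwa [cnj_cnj, mul_inv_cancel, cnj_one] at h4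

lemma zipper_unique [Finite G] : ∀ d : ℕ, ∀ T S : Subgroup G,
    Nat.card T - Nat.card S ≤ d → S ≤ T →
    (∀ K, S ≤ K → K < T → SubnormalIn K S) →
    ¬ SubnormalIn T S →
    ∀ M₁ M₂, IsMaxIn T M₁ → S ≤ M₁ → IsMaxIn T M₂ → S ≤ M₂ → M₁ = M₂ := by
  intro d
  induction d with
  | zero =>
      intro T S hd hST hA hB M₁ M₂ h1 h1' h2 h2'
      exfalso
      have hle : Nat.card T ≤ Nat.card S := by omega
      have : S = T := eq_of_le_of_card_le hST hle
      rw [this] at hB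
      exact hB (SubnormalIn.refl T)
  | succ d ihd =>
      intro T S hd hST hA hB M₁ M₂ h1 h1' h2 h2'
      -- AUX construction: the descending normal-closure series inside a maximal K
      have AUX : ∀ m : ℕ, ∀ K D : Subgroup G, Nat.card D ≤ m → IsMaxIn T K →
          S ≤ D → D ≤ K → SubnormalIn D S →
          (∀ M', IsMaxIn T M' → D ≤ M' → M' = K) →
          ∃ Y, S ≤ Y ∧ Y ≤ Subgroup.normalizer ((S : Subgroup G) : Set G) ∧ Y ≤ T ∧
            (∀ M', IsMaxIn T M' → Y ≤ M' → M' = K) := by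
        intro m
        induction m with
        | zero =>
            intro K D hcard
            have := Nat.card_pos (α := D)
            omega
        | succ m ihm =>
            intro K D hcard hK hSD hDK hsubD hprop
            by_cases hfix : ncIn D S = S
            · exact ⟨D, hSD, le_normalizer_of_ncIn_eq hfix,
                le_trans hDK hK.1.le, hprop⟩
            · set D' := ncIn D S with hD'def
              have hSD' : S ≤ D' := le_ncIn D S
              have hSltD' : S < D' := lt_of_le_of_ne hSD' (fun e => hfix e.symm)
              have hD'D : D' ≤ D := ncIn_le_self hSD
              have hD'lt : D' < D := by
                rcases lt_or_eq_of_le hD'D with h | h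
                · exact h
                · exfalso
                  have heq : S = D := hsubD.eq_of_ncIn_eq h
                  apply hfix
                  rw [h, ← heq]
              have hD'T : D' < T := lt_of_lt_of_le hD'lt (le_trans hDK hK.1.le)
              have hsubD' : SubnormalIn D' S := hA D' hSD' hD'T
              -- (A) property for D'
              have hAD' : ∀ K', D' ≤ K' → K' < T → SubnormalIn K' D' := by
                intro K' hleK' hK'T
                rw [hD'def, ncIn]
                apply subnormalIn_iSup
                rintro ⟨c, hc⟩
                apply conj_subnormal_of_A hA (le_trans hDK hK.1.le hc)
                · exact le_trans (cnj_le_ncIn hc) hleK'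
                · exact hK'T
              -- (B) property for D'
              have hBD' : ¬ SubnormalIn T D' := by
                intro hcon
                exact hB (hcon.trans hsubD')
              -- uniqueness of maximal over D' via the outer induction
              have huniq : ∀ M', IsMaxIn T M' → D' ≤ M' → M' = K := by
                intro M' hM' hle'
                have hmeas : Nat.card T - Nat.card D' ≤ d := by
                  have := card_lt_of_lt hSltD'
                  omega
                exact ihd T D' hmeas hD'T.le hAD' hBD' M' K hM' hle' hK
                  (le_trans hD'D hDK)
              have hcard' : Nat.card D' ≤ m := by
                have := card_lt_of_lt hD'lt
                omega
              exact ihm K D' hcard' hK hSD' (le_trans hD'D hDK) hsubD' huniq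
      -- maximal subgroups trivially satisfy the uniqueness-over-themselves property
      have hselfprop : ∀ K : Subgroup G, IsMaxIn T K →
          (∀ M', IsMaxIn T M' → K ≤ M' → M' = K) := by
        intro K hK M' hM' hle
        rcases lt_or_eq_of_le hle with h | h
        · exact absurd (hK.2 M' h hM'.1.le) hM'.1.ne
        · exact h.symm
      obtain ⟨Y₁, hY₁S, hY₁N, hY₁T, hY₁prop⟩ := AUX (Nat.card M₁) M₁ M₁ le_rfl h1
        h1' le_rfl (hA M₁ h1' h1.1) (hselfprop M₁ h1)
      obtain ⟨Y₂, hY₂S, hY₂N, hY₂T, hY₂prop⟩ := AUX (Nat.card M₂) M₂ M₂ le_rfl h2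
        h2' le_rfl (hA M₂ h2' h2.1) (hselfprop M₂ h2)
      have hNlt : Subgroup.normalizer ((S : Subgroup G) : Set G) ⊓ T < T := by
        rcases lt_or_eq_of_le (inf_le_right : Subgroup.normalizer ((S : Subgroup G) : Set G) ⊓ T ≤ T) with h | h
        · exact h
        · exfalso
          apply hB
          apply SubnormalIn.of_normalIn
          refine ⟨hST, ?_⟩
          intro g hg
          apply cnj_eq_iff_mem_normalizer.2
          have : g ∈ Subgroup.normalizer ((S : Subgroup G) : Set G) ⊓ T := by rw [h]; exact hg
          exact this.1
      obtain ⟨Mstar, hMstarge, hMstarmax⟩ := exists_maxIn hNlt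
      have e1 : Mstar = M₁ := hY₁prop Mstar hMstarmax
        (le_trans (le_inf hY₁N hY₁T) hMstarge)
      have e2 : Mstar = M₂ := hY₂prop Mstar hMstarmax
        (le_trans (le_inf hY₂N hY₂T) hMstarge)
      rw [← e1, ← e2]

end BaerZip
namespace BaerZip

variable {G : Type*} [Group G]

lemma iterate_commutator_map {H : Type*} [Group H] (φ : H →* G) (y h : H) (n : ℕ) :
    φ ((fun a => ⁅a, y⁆)^[n] h) = (fun a => ⁅a, φ y⁆)^[n] (φ h) := by
  induction n generalizing h with
  | zero => rfl
  | succ n ih =>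
      rw [Function.iterate_succ_apply, Function.iterate_succ_apply, ih,
        map_commutatorElement]

lemma engel_conj {x : G} (hx : ∀ g : G, ∃ n, (fun h => ⁅h, x⁆)^[n] g = 1) (c : G) :
    ∀ g : G, ∃ n, (fun h => ⁅h, c * x * c⁻¹⁆)^[n] g = 1 := by
  intro a
  obtain ⟨n, hn⟩ := hx (c⁻¹ * a * c)
  refine ⟨n, ?_⟩
  have key := iterate_commutator_map (MulAut.conj c).toMonoidHom x (c⁻¹ * a * c) n
  rw [hn] at key
  simp only [map_one] at key
  have e1 : (MulAut.conj c).toMonoidHom (c⁻¹ * a * c) = a := by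
    simp only [MulEquiv.coe_toMonoidHom, MulAut.conj_apply]
    group
  have e2 : (MulAut.conj c).toMonoidHom x = c * x * c⁻¹ := by
    simp only [MulEquiv.coe_toMonoidHom, MulAut.conj_apply]
  rw [e1, e2] at key
  exact key.symm

lemma chain_mem {T : Subgroup G} {x g : G} (hx : x ∈ T) (hg : g ∈ T) (n : ℕ) :
    (fun h => ⁅h, x⁆)^[n] g ∈ T := by
  induction n with
  | zero => exact hg
  | succ n ih =>
      rw [Function.iterate_succ_apply']
      rw [commutatorElement_def]
      exact mul_mem (mul_mem (mul_mem ih hx) (inv_mem ih)) (inv_mem hx)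

lemma phi [Finite G] : ∀ n : ℕ, ∀ T : Subgroup G, Nat.card T ≤ n → ∀ x ∈ T,
    (∀ g ∈ T, ∃ m, (fun h => ⁅h, x⁆)^[m] g = 1) →
    SubnormalIn T (Subgroup.closure {x}) := by
  intro n
  induction n with
  | zero =>
      intro T hcard
      have := Nat.card_pos (α := T)
      omega
  | succ n ihn =>
      intro T hcard x hx hengel
      set S := Subgroup.closure {x} with hS
      have hxS : x ∈ S := Subgroup.subset_closure rfl
      have hST : S ≤ T := (Subgroup.closure_le T).2 (Set.singleton_subset_iff.2 hx)
      by_cases hW : ncIn T S = T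
      · -- hard case: full normal closure; use zipper + descent
        by_contra hB
        have hA : ∀ K, S ≤ K → K < T → SubnormalIn K S := by
          intro K hSK hKT
          have hcK : Nat.card K ≤ n := by
            have := card_lt_of_lt hKT
            omega
          exact ihn K hcK x (hSK hxS) (fun g hg => hengel g (hKT.le hg))
        have hSltT : S < T :=
          lt_of_le_of_ne hST (fun e => hB (e ▸ SubnormalIn.refl T))
        obtain ⟨M, hSM, hMmax⟩ := exists_maxIn hSltT
        have huniq : ∀ M', IsMaxIn T M' → S ≤ M' → M' = M :=
          fun M' hM' hSM' => zipper_unique (Nat.card T - Nat.card S) T S le_rfl hST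
            hA hB M' M hM' hSM' hMmax hSM
        have hNM : ∀ g ∈ T, cnj g M = M → g ∈ M := by
          intro g hgT hgN
          by_contra hgM
          have hMP : M < M ⊔ Subgroup.closure {g} := by
            refine lt_of_le_of_ne le_sup_left (fun e => hgM ?_)
            have : g ∈ M ⊔ Subgroup.closure {g} :=
              (le_sup_right : Subgroup.closure {g} ≤ _) (Subgroup.subset_closure rfl)
            rwa [← e] at this
          have hPT : M ⊔ Subgroup.closure {g} = T :=
            hMmax.2 _ hMP (sup_le hMmax.1.le
              ((Subgroup.closure_le T).2 (Set.singleton_subset_iff.2 hgT)))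
          have hTnorm : T ≤ Subgroup.normalizer ((M : Subgroup G) : Set G) := by
            rw [← hPT]
            apply sup_le Subgroup.le_normalizer
            apply (Subgroup.closure_le (Subgroup.normalizer ((M : Subgroup G) : Set G))).2
            exact Set.singleton_subset_iff.2 (cnj_eq_iff_mem_normalizer.1 hgN)
          have hle : ncIn T S ≤ M := by
            apply ncIn_le ?_ hSM
            exact ⟨hMmax.1.le, fun t ht => cnj_eq_iff_mem_normalizer.2 (hTnorm ht)⟩
          rw [hW] at hle
          exact hMmax.1.ne (le_antisymm hMmax.1.le hle)
        have hdescent : T ≤ M := by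
          intro g hgT
          obtain ⟨n₀, hn₀⟩ := hengel g hgT
          set c : ℕ → G := fun i => (fun h => ⁅h, x⁆)^[i] g with hc
          have hcT : ∀ i, c i ∈ T := fun i => chain_mem hx hgT i
          have hstep : ∀ i, c (i+1) = ⁅c i, x⁆ := by
            intro i
            rw [hc]
            exact Function.iterate_succ_apply' _ i g
          have key : ∀ j, j ≤ n₀ → c (n₀ - j) ∈ M := by
            intro j
            induction j with
            | zero =>
                intro _
                have hcn : c n₀ = 1 := by rw [hc]; exact hn₀
                rw [Nat.sub_zero, hcn]
                exact one_mem M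
            | succ j ihj =>
                intro hj
                have hcj : c (n₀ - j) ∈ M := ihj (by omega)
                have hidx : n₀ - j = (n₀ - (j+1)) + 1 := by omega
                set i := n₀ - (j+1) with hi
                have hci1 : c (i+1) ∈ M := by
                  rw [← hidx]
                  exact hcj
                have hax : (c i) * x * (c i)⁻¹ ∈ M := by
                  have e : (c i) * x * (c i)⁻¹ = ⁅c i, x⁆ * x := by
                    rw [commutatorElement_def]
                    group
                  rw [e, ← hstep i]
                  exact mul_mem hci1 (hSM hxS)
                have hconjS : cnj (c i) S ≤ M := by
                  rw [hS, cnj_closure_singleton]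
                  apply (Subgroup.closure_le M).2
                  exact Set.singleton_subset_iff.2 hax
                have hSM' : S ≤ cnj (c i)⁻¹ M := cnj_le_iff.1 hconjS
                have hM' : IsMaxIn T (cnj (c i)⁻¹ M) := hMmax.cnj_of_mem (inv_mem (hcT i))
                have heq := huniq _ hM' hSM'
                apply hNM (c i) (hcT i)
                have h2 := congrArg (cnj (c i)) heq
                rw [cnj_cnj, mul_inv_cancel, cnj_one] at h2
                exact h2.symm
          have hg0 : c 0 ∈ M := by
            have := key n₀ le_rfl
            simpa using this
          rw [hc] at hg0
          simpa using hg0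
        exact absurd (le_antisymm hMmax.1.le hdescent) hMmax.1.ne
      · -- recursive case: proper normal closure
        set W := ncIn T S with hWdef
        have hSW : S ≤ W := le_ncIn T S
        have hWT : W ≤ T := ncIn_le_self hST
        have hWlt : W < T := lt_of_le_of_ne hWT hW
        have hcW : Nat.card W ≤ n := by
          have := card_lt_of_lt hWlt
          omega
        have hrec : SubnormalIn W S :=
          ihn W hcW x (hSW hxS) (fun g hg => hengel g (hWT hg))
        exact (SubnormalIn.of_normalIn (normalIn_ncIn hST)).trans hrec

end BaerZip
namespace BaerZip

variable {G : Type*} [Group G]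

lemma normal_iSup {ι : Sort*} (f : ι → Subgroup G) (h : ∀ i, (f i).Normal) :
    (⨆ i, f i).Normal := by
  have hc : ∀ g : G, cnj g (⨆ i, f i) = ⨆ i, f i := by
    intro g
    rw [cnj_iSup]
    congr 1
    funext i
    exact (normalIn_top_iff.2 (h i)).2 g trivial
  constructor
  intro s hs g
  rw [← hc g, mem_cnj]
  have e : g⁻¹ * (g * s * g⁻¹) * g = s := by group
  rwa [e]

lemma normal_pgroup_le_sylow [Finite G] {p : ℕ} [Fact p.Prime] {Q : Subgroup G}
    (hQ : Q.Normal) (hp : IsPGroup p Q) (P : Sylow p G) : Q ≤ ↑P := by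
  obtain ⟨P₀, hP₀⟩ := hp.exists_le_sylow
  obtain ⟨g, hg⟩ := MulAction.exists_smul_eq G P₀ P
  have h1 : Q = cnj g Q := ((normalIn_top_iff.2 hQ).2 g trivial).symm
  have h2 : cnj g Q ≤ cnj g ↑P₀ := cnj_mono g hP₀
  have h3 : (↑(g • P₀) : Subgroup G) = cnj g (↑P₀ : Subgroup G) := by
    rw [Sylow.coe_subgroup_smul, Subgroup.pointwise_smul_def]
    rfl
  rw [h1, ← hg, h3]
  exact h2

lemma card_sup_dvd [Finite G] {N K : Subgroup G} (hN : N.Normal) :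
    Nat.card ↥(N ⊔ K) ∣ Nat.card N * Nat.card K := by
  have lag : Nat.card ↥(N ⊔ K) =
      Nat.card (N.subgroupOf (N ⊔ K)) * (N.subgroupOf (N ⊔ K)).index :=
    (Subgroup.card_mul_index (N.subgroupOf (N ⊔ K))).symm
  have e1 : Nat.card (N.subgroupOf (N ⊔ K)) = Nat.card N :=
    Nat.card_congr (Subgroup.subgroupOfEquivOfLe le_sup_left).toEquiv
  have e2 : (N.subgroupOf (N ⊔ K)).index ∣ Nat.card K := by
    haveI := hN
    have iso := (QuotientGroup.quotientInfEquivProdNormalQuotient K N).toEquiv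
    have e3 : (N.subgroupOf (K ⊔ N)).index = (N.subgroupOf K).index := by
      unfold Subgroup.index
      exact (Nat.card_congr iso).symm
    rw [sup_comm N K, e3]
    exact Subgroup.index_dvd_card (G := ↥K) (H := N.subgroupOf K)
  rw [lag, e1]
  exact mul_dvd_mul_left (Nat.card N) e2

lemma not_dvd_card_sSup {G' : Type*} [Group G'] [Finite G'] {p : ℕ} (hp : p.Prime)
    (s : Set (Subgroup G')) (h1 : ∀ N ∈ s, N.Normal) (h2 : ∀ N ∈ s, ¬ p ∣ Nat.card N) :
    ¬ p ∣ Nat.card ↥(sSup s) := by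
  have H : ∀ t : Set (Subgroup G'), t.Finite → (∀ N ∈ t, N.Normal) →
      (∀ N ∈ t, ¬ p ∣ Nat.card N) → ¬ p ∣ Nat.card ↥(sSup t) := by
    intro t ht
    refine Set.Finite.induction_on t ht ?_ ?_
    · intro _ _
      rw [sSup_empty, Subgroup.card_bot]
      exact hp.not_dvd_one
    · intro N t' hNt' ht' ih hnorm hcard
      rw [sSup_insert]
      intro hd
      have hdvd : Nat.card ↥(N ⊔ sSup t') ∣ Nat.card N * Nat.card ↥(sSup t') :=
        card_sup_dvd (hnorm N (Set.mem_insert _ _))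
      rcases (Nat.Prime.dvd_mul hp).1 (hd.trans hdvd) with h | h
      · exact hcard N (Set.mem_insert _ _) h
      · exact ih (fun N' hN' => hnorm N' (Set.mem_insert_of_mem _ hN'))
          (fun N' hN' => hcard N' (Set.mem_insert_of_mem _ hN')) h
  exact H s (Set.toFinite s) h1 h2

lemma engel_in_subgroup {W : Subgroup G} {y : G} (hyW : y ∈ W)
    (hy : ∀ g : G, ∃ n : ℕ, (fun h => ⁅h, y⁆)^[n] g = 1) :
    ∀ g : ↥W, ∃ n : ℕ, (fun h => ⁅h, (⟨y, hyW⟩ : ↥W)⁆)^[n] g = 1 := by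
  intro g
  obtain ⟨n, hn⟩ := hy (g : G)
  refine ⟨n, ?_⟩
  apply Subgroup.subtype_injective W
  have key := iterate_commutator_map W.subtype (⟨y, hyW⟩ : ↥W) g n
  rw [map_one, key]
  simpa [Subgroup.coe_subtype] using hn

lemma p_not_dvd_sylow_index {H : Type*} [Group H] [Finite H] {p : ℕ} [Fact p.Prime]
    (P : Sylow p H) : ¬ p ∣ (P : Subgroup H).index :=
  P.not_dvd_index

end BaerZip
namespace BaerZip

universe u

lemma normalClosure_def' {G : Type u} [Group G] (s : Set G) :
    Subgroup.normalClosure s = Subgroup.closure (Group.conjugatesOfSet s) := rfl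

theorem mainAux : ∀ (n : ℕ) (G : Type u) [Group G] [Finite G], Nat.card G ≤ n →
    Subgroup.closure {x : G | ∀ g : G, ∃ m : ℕ, (fun h => ⁅h, x⁆)^[m] g = 1} = ⊤ →
    Group.IsNilpotent G := by
  intro n
  induction n with
  | zero =>
      intro G _ _ hcard _
      exfalso
      have := Nat.card_pos (α := G)
      omega
  | succ n ih =>
      intro G _ _ hcard htop
      set E := {x : G | ∀ g : G, ∃ m : ℕ, (fun h => ⁅h, x⁆)^[m] g = 1} with hE
      by_cases hcyc : ∃ x ∈ E, Subgroup.closure {x} = ⊤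
      · obtain ⟨x, hx, hxt⟩ := hcyc
        have hc : IsCyclic G := by
          refine ⟨⟨x, ?_⟩⟩
          intro a
          have ha : a ∈ Subgroup.zpowers x := by
            rw [Subgroup.zpowers_eq_closure, hxt]
            exact Subgroup.mem_top a
          exact ha
        letI : CommGroup G := IsCyclic.commGroup
        exact CommGroup.isNilpotent
      · push_neg at hcyc
        have hsub : ∀ x ∈ E, SubnormalIn (⊤ : Subgroup G) (Subgroup.closure {x}) :=
          fun x hx => phi (Nat.card (⊤ : Subgroup G)) ⊤ le_rfl x trivial (fun g _ => hx g)
        set W : E → Subgroup G := fun x => Subgroup.normalClosure {(x : G)} with hWdef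
        have hWnormal : ∀ x : E, (W x).Normal := fun x => Subgroup.normalClosure_normal
        have hxW : ∀ x : E, (x : G) ∈ W x := fun x => Subgroup.subset_normalClosure rfl
        have hWproper : ∀ x : E, W x ≠ ⊤ := by
          rintro ⟨x, hx⟩ htop'
          rcases (hsub x hx).exists_normalIn with heq | ⟨U, hU, hle, hne⟩
          · exact hcyc x hx heq
          · haveI : U.Normal := normalIn_top_iff.1 hU
            have hWU : W ⟨x, hx⟩ ≤ U := Subgroup.normalClosure_le_normal
              (Set.singleton_subset_iff.2 (hle (Subgroup.subset_closure rfl)))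
            rw [htop'] at hWU
            exact hne (top_le_iff.1 hWU)
        have hWsup : ⨆ x : E, W x = ⊤ := by
          rw [eq_top_iff, ← htop]
          apply (Subgroup.closure_le _).2
          intro e he
          exact (le_iSup W ⟨e, he⟩) (hxW ⟨e, he⟩)
        have hWgen : ∀ x : E, Subgroup.closure
            {y : ↥(W x) | ∀ g : ↥(W x), ∃ m : ℕ, (fun h => ⁅h, y⁆)^[m] g = 1} = ⊤ := by
          rintro ⟨x, hx⟩
          rw [eq_top_iff]
          have hpre := Subgroup.closure_preimage_eq_top (Group.conjugatesOfSet {x})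
          rw [← normalClosure_def'] at hpre
          rw [← hpre]
          apply Subgroup.closure_mono
          rintro ⟨y, hyW⟩ hy
          have hy' : y ∈ Group.conjugatesOfSet {x} := hy
          obtain ⟨a, ha, hconj⟩ := Group.mem_conjugatesOfSet_iff.1 hy'
          rw [Set.mem_singleton_iff] at ha
          subst ha
          obtain ⟨c, hc⟩ := isConj_iff.1 hconj
          have hyE : ∀ g : G, ∃ m : ℕ, (fun h => ⁅h, y⁆)^[m] g = 1 := by
            rw [← hc]
            exact engel_conj hx c
          exact engel_in_subgroup hyW hyE
        have hcardW : ∀ x : E, Nat.card ↥(W x) ≤ n := by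
          intro x
          have h1 : W x < ⊤ := lt_top_iff_ne_top.2 (hWproper x)
          have h2 := card_lt_of_lt h1
          rw [Subgroup.card_top] at h2
          omega
        have hWnilp : ∀ x : E, Group.IsNilpotent ↥(W x) := fun x =>
          ih ↥(W x) (hcardW x) (hWgen x)
        have hsylow : ∀ (p : ℕ) (_hp : Fact p.Prime) (P : Sylow p G),
            (↑P : Subgroup G).Normal := by
          intro p hp P
          have hQ : ∀ x : E, ∃ Q : Subgroup G, Q.Normal ∧ IsPGroup p Q ∧ Q ≤ W x ∧
              ¬ p ∣ (Q.subgroupOf (W x)).index := by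
            intro x
            haveI := hWnormal x
            obtain ⟨Px⟩ : Nonempty (Sylow p ↥(W x)) := inferInstance
            have htfae := (isNilpotent_of_finite_tfae (G := ↥(W x))).out 0 3
            have hPnormal : (Px : Subgroup ↥(W x)).Normal := htfae.mp (hWnilp x) p hp Px
            haveI := hPnormal
            haveI : (Px : Subgroup ↥(W x)).Characteristic :=
              Sylow.characteristic_of_normal Px hPnormal
            refine ⟨(Px : Subgroup ↥(W x)).map (W x).subtype, ?_, ?_,
              Subgroup.map_subtype_le _, ?_⟩
            · exact ConjAct.normal_of_characteristic_of_normal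
            · exact Px.2.map _
            · rw [Subgroup.subgroupOf,
                Subgroup.comap_map_eq_self_of_injective (Subgroup.subtype_injective _)]
              exact p_not_dvd_sylow_index Px
          choose Q hQn hQp hQle hQidx using hQ
          set R : Subgroup G := ⨆ x : E, Q x with hR
          haveI hRnormal : R.Normal := normal_iSup Q hQn
          have hRP : R ≤ ↑P := iSup_le (fun x => normal_pgroup_le_sylow (hQn x) (hQp x) P)
          have hidx : ¬ p ∣ R.index := by
            set π := QuotientGroup.mk' R with hπdef
            have hπ : Function.Surjective π := QuotientGroup.mk'_surjective R
            have himg : ∀ x : E, ¬ p ∣ Nat.card ((W x).map π) := by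
              intro x
              set ψ : ↥(W x) →* (G ⧸ R) := π.comp (W x).subtype with hψ
              have hrange : ψ.range = (W x).map π := by
                rw [hψ, MonoidHom.range_eq_map, ← Subgroup.map_map]
                congr 1
                rw [← MonoidHom.range_eq_map, Subgroup.range_subtype]
              have hker : (Q x).subgroupOf (W x) ≤ ψ.ker := by
                intro w hw
                rw [MonoidHom.mem_ker]
                have hwR : (w : G) ∈ R := (le_iSup Q x) (Subgroup.mem_subgroupOf.1 hw)
                show π ((W x).subtype w) = 1
                rw [Subgroup.coe_subtype]
                exact (QuotientGroup.eq_one_iff _).2 hwR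
              have hcard1 : Nat.card ψ.range = ψ.ker.index := by
                rw [Subgroup.index]
                exact (Nat.card_congr (QuotientGroup.quotientKerEquivRange ψ).toEquiv).symm
              have hdvd2 : ψ.ker.index ∣ ((Q x).subgroupOf (W x)).index :=
                Subgroup.index_dvd_of_le hker
              rw [← hrange, hcard1]
              intro hd
              exact hQidx x (dvd_trans hd hdvd2)
            have hsup2 : ⨆ x : E, (W x).map π = ⊤ := by
              rw [← Subgroup.map_iSup, hWsup]
              exact Subgroup.map_top_of_surjective π hπ
            have hnotdvd : ¬ p ∣ Nat.card (G ⧸ R) := by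
              have h3 := not_dvd_card_sSup (p := p) Fact.out
                (Set.range (fun x : E => (W x).map π)) ?_ ?_
              · rw [sSup_range, hsup2, Subgroup.card_top] at h3
                exact h3
              · rintro N ⟨x, rfl⟩
                exact Subgroup.Normal.map (hWnormal x) π hπ
              · rintro N ⟨x, rfl⟩
                exact himg x
            rw [Subgroup.index]
            exact hnotdvd
          have hrel : R.relIndex ↑P * (↑P : Subgroup G).index = R.index :=
            Subgroup.relIndex_mul_index hRP
          have hreldvd : R.relIndex ↑P ∣ Nat.card ↥(↑P : Subgroup G) := by
            rw [Subgroup.relIndex]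
            exact Subgroup.index_dvd_card (G := ↥(↑P : Subgroup G)) (H := R.subgroupOf ↑P)
          obtain ⟨k, hk⟩ := IsPGroup.iff_card.1 P.2
          have hpnorel : ¬ p ∣ R.relIndex ↑P := by
            intro hd
            exact hidx (hrel ▸ Dvd.dvd.mul_right hd _)
          have hone : R.relIndex ↑P = 1 := by
            have hcop : Nat.Coprime p (R.relIndex ↑P) :=
              (Nat.Prime.coprime_iff_not_dvd Fact.out).2 hpnorel
            have hcop2 : Nat.Coprime (R.relIndex ↑P) (p ^ k) :=
              (Nat.Coprime.pow_left k hcop).symm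
            exact Nat.Coprime.eq_one_of_dvd hcop2 (hk ▸ hreldvd)
          have hPR : (↑P : Subgroup G) ≤ R := Subgroup.relIndex_eq_one.1 hone
          have hPeq : (↑P : Subgroup G) = R := le_antisymm hPR hRP
          rw [hPeq]
          exact hRnormal
        have htfae2 := (isNilpotent_of_finite_tfae (G := G)).out 3 0
        exact htfae2.mp hsylow

end BaerZip

/-- Baer's theorem: a finite group generated by its set of left Engel elements
is nilpotent. -/
theorem finite_generated_by_engel_isNilpotent (G : Type*) [Group G] [Finite G]
    (h : Subgroup.closure {x : G | ∀ g : G, ∃ n : ℕ, (fun g => ⁅g, x⁆)^[n] g = 1} = ⊤) :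
    Group.IsNilpotent G :=
  BaerZip.mainAux (Nat.card G) G le_rfl h
end

section
/- Let P be a powerful finite p-group generated by d elements x_1, ..., x_d. Then P is the product of the cyclic subgroups generated by the x_i: every element of P can be written as x_1^{a_1} x_2^{a_2} ⋯ x_d^{a_d}. -/
/-- The subgroup generated by all `n`-th powers. -/
def subgroupPow {P : Type*} [Group P] (H : Subgroup P) (n : ℕ) : Subgroup P :=
  Subgroup.closure {x : P | ∃ h ∈ H, h ^ n = x}

universe u

namespace PfAux

open Subgroup
open scoped commutatorElement

variable {G : Type*} [Group G]

theorem spow_le (H : Subgroup G) (n : ℕ) : subgroupPow H n ≤ H := by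
  refine (closure_le _).2 ?_
  rintro x ⟨h, hh, rfl⟩; exact pow_mem hh n

theorem mem_spow {H : Subgroup G} {h : G} (hh : h ∈ H) (n : ℕ) : h ^ n ∈ subgroupPow H n :=
  subset_closure ⟨h, hh, rfl⟩

theorem spow_mono {H K : Subgroup G} (h : H ≤ K) (n : ℕ) : subgroupPow H n ≤ subgroupPow K n := by
  refine (closure_le _).2 ?_
  rintro x ⟨y, hy, rfl⟩; exact mem_spow (h hy) n

theorem spow_eq_one {H : Subgroup G} {h : G} (hh : h ∈ H) {n : ℕ}
    (hbot : subgroupPow H n = ⊥) : h ^ n = 1 := by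
  have := mem_spow hh n
  rw [hbot, Subgroup.mem_bot] at this; exact this

theorem map_spow {G' : Type*} [Group G'] (f : G →* G') (H : Subgroup G) (n : ℕ) :
    Subgroup.map f (subgroupPow H n) = subgroupPow (Subgroup.map f H) n := by
  rw [subgroupPow, MonoidHom.map_closure]
  congr 1
  ext y
  constructor
  · rintro ⟨x, ⟨h, hh, rfl⟩, rfl⟩
    exact ⟨f h, Subgroup.mem_map_of_mem f hh, (map_pow f h n).symm⟩
  · rintro ⟨x, ⟨h, hh, rfl⟩, rfl⟩
    exact ⟨h ^ n, ⟨h, hh, rfl⟩, map_pow f h n⟩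

theorem spow_normal {H : Subgroup G} (hH : H.Normal) (n : ℕ) : (subgroupPow H n).Normal := by
  constructor
  intro x hx g
  have hmap : Subgroup.map ((MulAut.conj g).toMonoidHom) (subgroupPow H n) = subgroupPow H n := by
    rw [map_spow]
    congr 1
    ext y
    constructor
    · rintro ⟨h, hh, rfl⟩
      exact hH.conj_mem h hh g
    · intro hy
      exact ⟨g⁻¹ * y * g, by simpa using hH.conj_mem y hy g⁻¹, by simp [MulAut.conj]; group⟩
  rw [← hmap]
  exact Subgroup.mem_map_of_mem _ hx

theorem spow_spow_le (H : Subgroup G) (a b : ℕ) :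
    subgroupPow H (a * b) ≤ subgroupPow (subgroupPow H a) b := by
  refine (closure_le _).2 ?_
  rintro x ⟨h, hh, rfl⟩
  rw [pow_mul]
  exact mem_spow (mem_spow hh a) b

/-- commutator expansion -/
theorem comm_mul (a b y : G) : ⁅a * b, y⁆ = a * ⁅b, y⁆ * a⁻¹ * ⁅a, y⁆ := by
  simp only [commutatorElement_def]; group

/-- Key power-commutator identity. -/
theorem comm_pow (x y c d : G) (hc : ⁅x, y⁆ = c) (hxc : x * c * x⁻¹ = c * d)
    (hd : ∀ g, Commute d g) (n : ℕ) :
    ⁅x ^ n, y⁆ = c ^ n * d ^ (n.choose 2) := by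
  have hdm : ∀ (m : ℕ) (g : G), Commute (d ^ m) g := fun m g => (hd g).pow_left m
  have hconj : ∀ m : ℕ, x * c ^ m * x⁻¹ = c ^ m * d ^ m := by
    intro m
    rw [← conj_pow, hxc, ((hd c).symm).mul_pow]
  have hdconj : ∀ m : ℕ, x * d ^ m * x⁻¹ = d ^ m := by
    intro m
    have h := (hdm m x).eq
    rw [← h]; group
  induction n with
  | zero => simp [commutatorElement_def]
  | succ n ih =>
      have h1 : ⁅x ^ (n+1), y⁆ = x * ⁅x ^ n, y⁆ * x⁻¹ * ⁅x, y⁆ := by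
        rw [pow_succ']
        exact comm_mul x (x ^ n) y
      have h2 : x * (c ^ n * d ^ (n.choose 2)) * x⁻¹
          = (x * c ^ n * x⁻¹) * (x * d ^ (n.choose 2) * x⁻¹) := by group
      have hchoose : (n+1).choose 2 = n.choose 2 + n := by
        rw [Nat.choose_succ_succ]; simp [Nat.choose_one_right, Nat.add_comm]
      rw [h1, ih, hc, h2, hconj, hdconj, hchoose]
      calc c ^ n * d ^ n * d ^ (n.choose 2) * c
          = c ^ n * (d ^ (n + n.choose 2) * c) := by rw [pow_add]; simp [mul_assoc]
        _ = c ^ n * (c * d ^ (n + n.choose 2)) := by rw [(hdm _ c).eq]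
        _ = c ^ (n+1) * d ^ (n.choose 2 + n) := by
            rw [pow_succ, Nat.add_comm n]; simp [mul_assoc]

/-- central multiplication power identity. -/
theorem mul_pow_central (a b c : G) (hc : b * a = a * b * c)
    (hca : Commute c a) (hcb : Commute c b) (n : ℕ) :
    (a * b) ^ n = a ^ n * b ^ n * c ^ (n.choose 2) := by
  have hban : ∀ m : ℕ, b * a ^ m = a ^ m * b * c ^ m := by
    intro m
    induction m with
    | zero => simp
    | succ j ihj =>
        rw [pow_succ, ← mul_assoc, ihj]
        calc a ^ j * b * c ^ j * a
            = a ^ j * b * (c ^ j * a) := by simp [mul_assoc]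
          _ = a ^ j * b * (a * c ^ j) := by rw [(hca.pow_left j).eq]
          _ = a ^ j * (b * a) * c ^ j := by simp [mul_assoc]
          _ = a ^ j * (a * b * c) * c ^ j := by rw [hc]
          _ = a ^ j * a * b * (c * c ^ j) := by simp [mul_assoc]
          _ = a ^ j * a * b * (c ^ j * c) := by rw [((Commute.refl c).pow_right j).eq]
          _ = a ^ j * a * b * c ^ (j+1) := by rw [pow_succ c j]
  induction n with
  | zero => simp
  | succ k ihk =>
      have hchoose : (k+1).choose 2 = k.choose 2 + k := by
        rw [Nat.choose_succ_succ]; simp [Nat.choose_one_right, Nat.add_comm]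
      rw [pow_succ' (a*b), ihk, hchoose]
      calc a * b * (a ^ k * b ^ k * c ^ (k.choose 2))
          = a * (b * a ^ k) * (b ^ k * c ^ (k.choose 2)) := by simp [mul_assoc]
        _ = a * (a ^ k * b * c ^ k) * (b ^ k * c ^ (k.choose 2)) := by rw [hban k]
        _ = a * a ^ k * b * (c ^ k * b ^ k) * c ^ (k.choose 2) := by simp [mul_assoc]
        _ = a * a ^ k * b * (b ^ k * c ^ k) * c ^ (k.choose 2) := by
            rw [((hcb.pow_left k).pow_right k).eq]
        _ = (a * a ^ k) * (b * b ^ k) * (c ^ k * c ^ (k.choose 2)) := by simp [mul_assoc]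
        _ = a ^ (k+1) * b ^ (k+1) * c ^ (k.choose 2 + k) := by
            rw [← pow_succ', ← pow_succ', ← pow_add, Nat.add_comm k (k.choose 2)]


theorem normal_of_comm_le {N : Subgroup G} (h : ⁅N, (⊤ : Subgroup G)⁆ ≤ N) : N.Normal := by
  constructor
  intro x hx g
  have h1 : ⁅g, x⁆ ∈ ⁅N, (⊤ : Subgroup G)⁆ := by
    rw [Subgroup.commutator_comm]
    exact commutator_mem_commutator (mem_top g) hx
  have : g * x * g⁻¹ = ⁅g, x⁆ * x := by simp [commutatorElement_def]
  rw [this]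
  exact mul_mem (h h1) hx

theorem commute_of_le_bot {A : Subgroup G} (h : ⁅A, (⊤ : Subgroup G)⁆ = ⊥)
    {a : G} (ha : a ∈ A) (g : G) : Commute a g := by
  have : ⁅a, g⁆ ∈ ⁅A, (⊤ : Subgroup G)⁆ := commutator_mem_commutator ha (mem_top g)
  rw [h, Subgroup.mem_bot] at this
  exact commutatorElement_eq_one_iff_commute.1 this

theorem comm_le_bot_of_central {A : Subgroup G}
    (h : ∀ a ∈ A, ∀ g : G, Commute a g) : ⁅A, (⊤ : Subgroup G)⁆ = ⊥ := by
  rw [eq_bot_iff, Subgroup.commutator_le]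
  intro a ha g _
  rw [Subgroup.mem_bot, commutatorElement_eq_one_iff_commute]
  exact h a ha g

open Subgroup
variable {G : Type*} [Group G]


theorem sup_comm_le (A B : Subgroup G) (hA : A.Normal) (hB : B.Normal) :
    ⁅A ⊔ B, (⊤ : Subgroup G)⁆ ≤ ⁅A, (⊤ : Subgroup G)⁆ ⊔ ⁅B, (⊤ : Subgroup G)⁆ := by
  rw [Subgroup.commutator_le]
  intro x hx g _
  have : B.Normal := hB
  rw [← SetLike.mem_coe, Subgroup.mul_normal A B] at hx
  obtain ⟨a, ha, b, hb, rfl⟩ := hx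
  rw [comm_mul]
  have h1 : ⁅b, g⁆ ∈ ⁅B, (⊤ : Subgroup G)⁆ := commutator_mem_commutator hb (mem_top g)
  have hn : (⁅B, (⊤ : Subgroup G)⁆).Normal := Subgroup.commutator_normal B ⊤
  have h2 : a * ⁅b, g⁆ * a⁻¹ ∈ ⁅B, (⊤ : Subgroup G)⁆ := hn.conj_mem _ h1 a
  exact mul_mem (le_sup_right (α := Subgroup G) h2)
    (le_sup_left (α := Subgroup G) (commutator_mem_commutator ha (mem_top g)))

theorem frattini_absorb [Finite G] (hnil : Group.IsNilpotent G) (T W : Subgroup G)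
    (hT : T.Normal) (hW : W.Normal) (h : W ≤ T ⊔ ⁅W, (⊤ : Subgroup G)⁆) : W ≤ T := by
  set D : ℕ → Subgroup G := fun i => (fun X => ⁅X, (⊤ : Subgroup G)⁆)^[i] W with hD
  have hDsucc : ∀ i, D (i + 1) = ⁅D i, (⊤ : Subgroup G)⁆ := by
    intro i; rw [hD]; simp [Function.iterate_succ_apply']
  have hDnormal : ∀ i, (D i).Normal := by
    intro i; induction i with
    | zero => exact hW
    | succ k ih => rw [hDsucc]; exact Subgroup.commutator_normal _ _
  have hDlcs : ∀ i, D i ≤ Subgroup.lowerCentralSeries (⊤ : Subgroup G) i := by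
    intro i; induction i with
    | zero => exact le_top
    | succ k ih =>
        rw [hDsucc, Subgroup.lowerCentralSeries_succ]
        exact Subgroup.commutator_mono ih le_rfl
  have key : ∀ i, W ≤ T ⊔ D i := by
    intro i; induction i with
    | zero => exact le_trans le_sup_right le_rfl
    | succ k ih =>
        refine le_trans h ?_
        have h1 : ⁅W, (⊤ : Subgroup G)⁆ ≤ ⁅T ⊔ D k, (⊤ : Subgroup G)⁆ :=
          Subgroup.commutator_mono ih le_rfl
        have h2 : ⁅T ⊔ D k, (⊤ : Subgroup G)⁆ ≤ ⁅T, (⊤ : Subgroup G)⁆ ⊔ ⁅D k, (⊤ : Subgroup G)⁆ :=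
          sup_comm_le T (D k) hT (hDnormal k)
        have h3 : ⁅T, (⊤ : Subgroup G)⁆ ≤ T := Subgroup.commutator_le_left T ⊤
        have h4 : ⁅W, (⊤ : Subgroup G)⁆ ≤ T ⊔ D (k + 1) := by
          rw [hDsucc]
          exact le_trans h1 (le_trans h2 (sup_le (le_trans h3 le_sup_left) le_sup_right))
        exact sup_le le_sup_left h4
  obtain ⟨n, hn⟩ := Subgroup.nilpotent_iff_lowerCentralSeries.mp hnil
  have : D n = ⊥ := le_bot_iff.mp (hn ▸ hDlcs n)
  simpa [this] using key n


open Subgroup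

-- quotient card lemma
theorem card_quot_lt {G : Type*} [Group G] [Finite G] (K : Subgroup G) [K.Normal]
    (hK : K ≠ ⊥) : Nat.card (G ⧸ K) < Nat.card G := by
  have h1 : Nat.card G = Nat.card (G ⧸ K) * Nat.card K :=
    Subgroup.card_eq_card_quotient_mul_card_subgroup K
  have h2 : 1 < Nat.card K := by
    have := (Subgroup.nontrivial_iff_ne_bot K).2 hK
    exact Finite.one_lt_card_iff_nontrivial.2 this
  have h3 : 0 < Nat.card (G ⧸ K) := Nat.card_pos
  calc Nat.card (G ⧸ K) = Nat.card (G ⧸ K) * 1 := by ring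
    _ < Nat.card (G ⧸ K) * Nat.card K := by
        exact (Nat.mul_lt_mul_left h3).2 h2
    _ = Nat.card G := h1.symm

/-- the "nongenerator" property of p-th powers in finite p-groups -/
theorem ng (p : ℕ) (hp : p.Prime) : ∀ (n : ℕ) (V : Type u) [Group V] [Finite V],
    IsPGroup p V → Nat.card V ≤ n → ∀ H : Subgroup V,
    ⊤ ≤ H ⊔ subgroupPow (⊤ : Subgroup V) p → H = ⊤ := by
  intro n
  induction n with
  | zero => intro V _ _ _ hcard _ _; exact absurd (Nat.card_pos.trans_le hcard) (by simp)
  | succ n ih =>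
      intro V _ _ hV hcard H h
      by_cases hs : Subsingleton V
      · refine Subgroup.eq_top_iff' H |>.2 fun x => ?_
        have : x = 1 := Subsingleton.elim x 1
        rw [this]; exact H.one_mem
      · haveI : Nontrivial V := not_subsingleton_iff_nontrivial.mp hs
        haveI : Fact p.Prime := ⟨hp⟩
        haveI : Nontrivial (Subgroup.center V) := hV.center_nontrivial
        have hZ : Subgroup.center V ≠ ⊥ := (Subgroup.nontrivial_iff_ne_bot _).1 ‹_›
        set Z := Subgroup.center V with hZdef
        let π := QuotientGroup.mk' Z
        have hπ : Function.Surjective π := QuotientGroup.mk'_surjective Z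
        have hcard' : Nat.card (V ⧸ Z) ≤ n := by
          have := card_quot_lt Z hZ
          omega
        -- transfer hypothesis
        have htop : (⊤ : Subgroup V) = H ⊔ subgroupPow ⊤ p := le_antisymm h le_top
        have hmapspow : Subgroup.map π (subgroupPow (⊤ : Subgroup V) p)
            = subgroupPow (⊤ : Subgroup (V ⧸ Z)) p := by
          rw [subgroupPow, MonoidHom.map_closure]
          congr 1
          ext y
          constructor
          · rintro ⟨x, ⟨h, -, rfl⟩, rfl⟩
            exact ⟨π h, trivial, (map_pow π h p).symm⟩
          · rintro ⟨x, -, rfl⟩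
            obtain ⟨v, rfl⟩ := hπ x
            exact ⟨v ^ p, ⟨v, trivial, rfl⟩, map_pow π v p⟩
        have htrans : (⊤ : Subgroup (V ⧸ Z)) ≤ Subgroup.map π H ⊔ subgroupPow ⊤ p := by
          have h2 : Subgroup.map π ⊤ ≤ Subgroup.map π (H ⊔ subgroupPow ⊤ p) :=
            Subgroup.map_mono h
          rwa [Subgroup.map_sup, hmapspow, Subgroup.map_top_of_surjective π hπ] at h2
        have hHtop := ih (V ⧸ Z) (hV.to_quotient Z) hcard' (Subgroup.map π H) htrans
        -- pull back
        have hHZ : H ⊔ Z = ⊤ := by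
          have : Subgroup.comap π (Subgroup.map π H) = H ⊔ π.ker := Subgroup.comap_map_eq π H
          have hker : π.ker = Z := QuotientGroup.ker_mk' Z
          rw [hHtop] at this
          rw [← hker, ← this]
          simp [Subgroup.comap_top]
        -- iterate central powers
        let Q : ℕ → Subgroup V := fun k =>
          { carrier := {v | ∃ z ∈ Subgroup.center V, z ^ (p ^ k) = v}
            one_mem' := ⟨1, Subgroup.one_mem _, one_pow _⟩
            mul_mem' := by
              rintro a b ⟨z1, hz1, rfl⟩ ⟨z2, hz2, rfl⟩
              refine ⟨z1 * z2, Subgroup.mul_mem _ hz1 hz2, ?_⟩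
              have hcm : Commute z1 z2 := ((Subgroup.mem_center_iff.1 hz1) z2).symm
              rw [hcm.mul_pow]
            inv_mem' := by
              rintro a ⟨z, hz, rfl⟩
              exact ⟨z⁻¹, Subgroup.inv_mem _ hz, by rw [inv_pow]⟩ }
        have hQle : ∀ k, Q k ≤ Subgroup.center V := by
          rintro k v ⟨z, hz, rfl⟩; exact Subgroup.pow_mem _ hz _
        haveI hQnormal : ∀ k, (Q k).Normal := by
          intro k
          constructor
          intro v hv g
          have hc := (Subgroup.mem_center_iff.1 (hQle k hv)) g
          have : g * v * g⁻¹ = v := by rw [hc]; group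
          rw [this]; exact hv
        have hQ0 : Q 0 = Z := by
          ext v
          constructor
          · rintro ⟨z, hz, rfl⟩; simpa using hz
          · intro hv; exact ⟨v, hv, by simp⟩
        have hstep : ∀ k, H ⊔ Q k = ⊤ → H ⊔ Q (k + 1) = ⊤ := by
          intro k hk
          have hsub : subgroupPow (⊤ : Subgroup V) p ≤ H ⊔ Q (k + 1) := by
            refine (Subgroup.closure_le _).2 ?_
            rintro x ⟨v, -, rfl⟩
            have hv : v ∈ H ⊔ Q k := hk ▸ Subgroup.mem_top v
            haveI := hQnormal k
            rw [← SetLike.mem_coe, Subgroup.mul_normal H (Q k)] at hv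
            obtain ⟨a, ha, b, hb, rfl⟩ := hv
            obtain ⟨z, hz, rfl⟩ := hb
            have hcomm : Commute a (z ^ p ^ k) :=
              (Subgroup.mem_center_iff.1 (Subgroup.pow_mem _ hz _)) a
            rw [hcomm.mul_pow]
            refine Subgroup.mul_mem _ (le_sup_left (α := Subgroup V) (Subgroup.pow_mem H ha p)) ?_
            refine le_sup_right (α := Subgroup V) ?_
            exact ⟨z, hz, by rw [← pow_mul, ← pow_succ]⟩
          have h5 : (⊤ : Subgroup V) ≤ H ⊔ Q (k+1) := by
            rw [htop]; exact sup_le le_sup_left hsub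
          exact le_antisymm le_top h5
        have hiter : ∀ k, H ⊔ Q k = ⊤ := by
          intro k
          induction k with
          | zero => rw [hQ0]; exact hHZ
          | succ k ihk => exact hstep k ihk
        obtain ⟨m, hm⟩ := IsPGroup.iff_card.1 hV
        have hQm : Q m = ⊥ := by
          rw [eq_bot_iff]
          rintro v ⟨z, hz, rfl⟩
          rw [Subgroup.mem_bot, ← hm]
          exact pow_card_eq_one'
        have := hiter m
        rw [hQm, sup_bot_eq] at this
        exact this



section T2
variable (p : ℕ)

/-- DDMS: if `N` is powerfully embedded (odd p), so is `N^p`. -/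
theorem t2odd (hp : p.Prime) (hodd : p ≠ 2) : ∀ (n : ℕ) (G : Type u) [Group G] [Finite G],
    IsPGroup p G → Nat.card G ≤ n → ∀ N : Subgroup G,
    ⁅N, (⊤ : Subgroup G)⁆ ≤ subgroupPow N p →
    ⁅subgroupPow N p, (⊤ : Subgroup G)⁆ ≤ subgroupPow (subgroupPow N p) p := by
  intro n
  induction n with
  | zero => intro G _ _ _ hcard _ _; exact absurd (Nat.card_pos.trans_le hcard) (by simp)
  | succ n ih =>
      intro G _ _ hG hcard N hN
      haveI : Fact p.Prime := ⟨hp⟩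
      have hNnormal : N.Normal := normal_of_comm_le (le_trans hN (spow_le N p))
      set M := subgroupPow N p with hM
      set T := subgroupPow M p with hT
      set W := ⁅M, (⊤ : Subgroup G)⁆ with hW
      haveI hMnormal : M.Normal := spow_normal hNnormal p
      haveI hTnormal : T.Normal := spow_normal hMnormal p
      haveI hWnormal : W.Normal := Subgroup.commutator_normal M ⊤
      haveI hW'normal : (⁅W, (⊤ : Subgroup G)⁆).Normal := Subgroup.commutator_normal W ⊤
      set K := T ⊔ ⁅W, (⊤ : Subgroup G)⁆ with hK
      haveI hKnormal : K.Normal := Subgroup.sup_normal T _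
      by_cases hKbot : K = ⊥
      · -- direct computation
        have hTbot : T = ⊥ := le_bot_iff.1 (hKbot ▸ (le_sup_left : T ≤ K))
        have hW'bot : ⁅W, (⊤ : Subgroup G)⁆ = ⊥ :=
          le_bot_iff.1 (hKbot ▸ (le_sup_right : ⁅W, (⊤ : Subgroup G)⁆ ≤ K))
        -- show M is central
        have hMcentral : ∀ m ∈ M, ∀ g : G, Commute m g := by
          have hgen : ∀ x ∈ {x : G | ∃ h ∈ N, h ^ p = x}, ∀ g : G, Commute x g := by
            rintro x ⟨h, hh, rfl⟩ g
            set c := ⁅h, g⁆ with hc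
            have hcM : c ∈ M := hN (commutator_mem_commutator hh (mem_top g))
            set d := c⁻¹ * (h * c * h⁻¹) with hd
            have hdW : d ∈ W := by
              have : d = ⁅c⁻¹, h⁆ := by rw [hd]; simp [commutatorElement_def]; group
              rw [this]
              exact commutator_mem_commutator (M.inv_mem hcM) (mem_top h)
            have hdcentral : ∀ g' : G, Commute d g' := fun g' =>
              commute_of_le_bot hW'bot hdW g'
            have hxc : h * c * h⁻¹ = c * d := by rw [hd]; group
            have hcp : c ^ p = 1 := spow_eq_one hcM hTbot
            have hdp : d ^ p = 1 := by
              have hcomm : Commute c⁻¹ (h * c * h⁻¹) := by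
                rw [hxc]
                exact (Commute.refl c).inv_left.mul_right (hdcentral c⁻¹).symm
              rw [hd, hcomm.mul_pow, inv_pow, hcp, conj_pow, hcp]
              simp
            have hcomm := comm_pow h g c d rfl hxc hdcentral p
            have harith : p.choose 2 = p * ((p - 1) / 2) := by
              obtain ⟨k, hk⟩ := hp.odd_of_ne_two hodd
              have h2 : 2 ∣ (p - 1) := ⟨k, by omega⟩
              rw [Nat.choose_two_right, Nat.mul_div_assoc p h2]
            have : ⁅h ^ p, g⁆ = 1 := by
              rw [hcomm, hcp, harith, pow_mul, hdp, one_pow, one_mul]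
            exact commutatorElement_eq_one_iff_commute.1 this
          intro m hm g
          rw [hM, subgroupPow] at hm
          induction hm using closure_induction with
          | mem x hx => exact hgen x hx g
          | one => exact Commute.one_left g
          | mul a b _ _ ha hb => exact ha.mul_left hb
          | inv a _ ha => exact ha.inv_left
        have : W = ⊥ := comm_le_bot_of_central hMcentral
        rw [this]
        exact bot_le
      · -- quotient reduction
        let π := QuotientGroup.mk' K
        have hπ : Function.Surjective π := QuotientGroup.mk'_surjective K
        have hcard' : Nat.card (G ⧸ K) ≤ n := by
          have := card_quot_lt K hKbot
          omega
        have hmaptop : Subgroup.map π ⊤ = ⊤ := Subgroup.map_top_of_surjective π hπ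
        have hhyp : ⁅Subgroup.map π N, (⊤ : Subgroup (G ⧸ K))⁆
            ≤ subgroupPow (Subgroup.map π N) p := by
          have := Subgroup.map_mono (f := π) hN
          rwa [Subgroup.map_commutator, hmaptop, map_spow π] at this
        have hconc := ih (G ⧸ K) (hG.to_quotient K) hcard' (Subgroup.map π N) hhyp
        rw [← map_spow π, ← map_spow π, ← hmaptop, ← Subgroup.map_commutator] at hconc
        have hWTK : W ≤ T ⊔ K := by
          calc W ≤ Subgroup.comap π (Subgroup.map π W) := Subgroup.le_comap_map π W
            _ ≤ Subgroup.comap π (Subgroup.map π T) := Subgroup.comap_mono hconc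
            _ = T ⊔ π.ker := Subgroup.comap_map_eq π T
            _ = T ⊔ K := by rw [QuotientGroup.ker_mk']
        have hWTW : W ≤ T ⊔ ⁅W, (⊤ : Subgroup G)⁆ := by
          rw [hK] at hWTK
          rwa [← sup_assoc, sup_idem] at hWTK
        exact frattini_absorb hG.isNilpotent T W hTnormal hWnormal hWTW


/-- DDMS p=2 helper: `[N^4, G] ≤ (N^2)^4` for `N` powerfully embedded. -/
theorem l2 : ∀ (n : ℕ) (G : Type u) [Group G] [Finite G],
    IsPGroup 2 G → Nat.card G ≤ n → ∀ N : Subgroup G,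
    ⁅N, (⊤ : Subgroup G)⁆ ≤ subgroupPow N 4 →
    ⁅subgroupPow N 4, (⊤ : Subgroup G)⁆ ≤ subgroupPow (subgroupPow N 2) 4 := by
  intro n
  induction n with
  | zero => intro G _ _ _ hcard _ _; exact absurd (Nat.card_pos.trans_le hcard) (by simp)
  | succ n ih =>
      intro G _ _ hG hcard N hN
      haveI : Fact (Nat.Prime 2) := ⟨Nat.prime_two⟩
      have hNnormal : N.Normal := normal_of_comm_le (le_trans hN (spow_le N 4))
      set M4 := subgroupPow N 4 with hM4
      set M2 := subgroupPow N 2 with hM2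
      set T := subgroupPow M2 4 with hT
      set W := ⁅M4, (⊤ : Subgroup G)⁆ with hW
      haveI hM4normal : M4.Normal := spow_normal hNnormal 4
      haveI hM2normal : M2.Normal := spow_normal hNnormal 2
      haveI hTnormal : T.Normal := spow_normal hM2normal 4
      haveI hWnormal : W.Normal := Subgroup.commutator_normal M4 ⊤
      haveI hW'normal : (⁅W, (⊤ : Subgroup G)⁆).Normal := Subgroup.commutator_normal W ⊤
      have h8T : subgroupPow N 8 ≤ T := by
        have := spow_spow_le N 2 4
        norm_num at this
        exact this
      set K := T ⊔ ⁅W, (⊤ : Subgroup G)⁆ with hK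
      haveI hKnormal : K.Normal := Subgroup.sup_normal T _
      by_cases hKbot : K = ⊥
      · have hTbot : T = ⊥ := le_bot_iff.1 (hKbot ▸ (le_sup_left : T ≤ K))
        have hW'bot : ⁅W, (⊤ : Subgroup G)⁆ = ⊥ :=
          le_bot_iff.1 (hKbot ▸ (le_sup_right : ⁅W, (⊤ : Subgroup G)⁆ ≤ K))
        have h8bot : subgroupPow N 8 = ⊥ := le_bot_iff.1 (hTbot ▸ h8T)
        have hWcen : ∀ w ∈ W, ∀ g : G, Commute w g := fun w hw g =>
          commute_of_le_bot hW'bot hw g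
        -- elements of M4: v^4 = 1 and v^2 central
        have hQ : ∀ v ∈ M4, v ^ 4 = 1 ∧ ∀ g : G, Commute (v ^ 2) g := by
          intro v hv
          have hv' : v ∈ Subgroup.closure {x : G | ∃ h ∈ N, h ^ 4 = x} := hv
          clear hv
          induction hv' using closure_induction with
          | mem x hx =>
              obtain ⟨h, hh, rfl⟩ := hx
              have h8 : h ^ 8 = 1 := spow_eq_one hh h8bot
              constructor
              · have e : (h ^ 4) ^ 4 = (h ^ 8) ^ 2 := by
                  rw [← pow_mul, ← pow_mul]
                rw [e, h8, one_pow]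
              · intro g
                have e : (h ^ 4) ^ 2 = h ^ 8 := by rw [← pow_mul]
                rw [e, h8]
                exact Commute.one_left g
          | one => exact ⟨one_pow 4, fun g => by rw [one_pow]; exact Commute.one_left g⟩
          | mul a b ha hb iha ihb =>
              have haM : a ∈ M4 := ha
              have hbM : b ∈ M4 := hb
              set c := b⁻¹ * a⁻¹ * b * a with hc
              have hcW : c ∈ W := by
                have e : c = ⁅b⁻¹, a⁻¹⁆ := by
                  rw [hc]; simp only [commutatorElement_def]; group
                rw [e]
                exact commutator_mem_commutator (M4.inv_mem hbM) (mem_top a⁻¹)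
              have hccen : ∀ g : G, Commute c g := hWcen c hcW
              have hmul : b * a = a * b * c := by rw [hc]; group
              have hc2 : c ^ 2 = 1 := by
                have e2 : (⁅b⁻¹, a⁻¹⁆ : G) = c := by
                  rw [hc]; simp only [commutatorElement_def]; group
                have e1 : ⁅b⁻¹ * b⁻¹, a⁻¹⁆ = b⁻¹ * ⁅b⁻¹, a⁻¹⁆ * b * ⁅b⁻¹, a⁻¹⁆ := by
                  rw [comm_mul]; group
                have e3 : b⁻¹ * c * b = c := by
                  calc b⁻¹ * c * b = b⁻¹ * (c * b) := by group
                    _ = b⁻¹ * (b * c) := by rw [(hccen b).eq]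
                    _ = c := by group
                have e4 : ⁅b⁻¹ * b⁻¹, a⁻¹⁆ = c ^ 2 := by
                  rw [e1, e2, e3, pow_two]
                have e5 : b⁻¹ * b⁻¹ = (b ^ 2)⁻¹ := by rw [pow_two]; group
                have e6 : ⁅(b ^ 2)⁻¹, a⁻¹⁆ = 1 := by
                  rw [commutatorElement_eq_one_iff_commute]
                  exact (ihb.2 a⁻¹).inv_left
                rw [← e4, e5, e6]
              have hab := mul_pow_central a b c hmul (hccen a) (hccen b)
              have hch4 : (4 : ℕ).choose 2 = 6 := by decide
              have hch2 : (2 : ℕ).choose 2 = 1 := by decide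
              constructor
              · have e := hab 4
                rw [hch4] at e
                have e6 : c ^ 6 = (c ^ 2) ^ 3 := by rw [← pow_mul]
                rw [e, iha.1, ihb.1, e6, hc2]
                simp
              · intro g
                have e := hab 2
                rw [hch2, pow_one] at e
                rw [e]
                exact ((iha.2 g).mul_left (ihb.2 g)).mul_left (hccen g)
          | inv a ha iha =>
              exact ⟨by rw [inv_pow, iha.1, inv_one],
                fun g => by rw [inv_pow]; exact (iha.2 g).inv_left⟩
        -- show M4 central, elementwise on generators n^4
        have hM4cen : ∀ m ∈ M4, ∀ g : G, Commute m g := by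
          have hgen : ∀ x ∈ {x : G | ∃ h ∈ N, h ^ 4 = x}, ∀ g : G, Commute x g := by
            rintro x ⟨h, hh, rfl⟩ g
            set c := ⁅h, g⁆ with hc
            have hcM : c ∈ M4 := hN (commutator_mem_commutator hh (mem_top g))
            set d := c⁻¹ * (h * c * h⁻¹) with hd
            have hdW : d ∈ W := by
              have e : d = ⁅c⁻¹, h⁆ := by
                rw [hd]; simp only [commutatorElement_def]; group
              rw [e]
              exact commutator_mem_commutator (M4.inv_mem hcM) (mem_top h)
            have hdcen : ∀ g' : G, Commute d g' := hWcen d hdW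
            have hxc : h * c * h⁻¹ = c * d := by rw [hd]; group
            obtain ⟨hc4, hc2cen⟩ := hQ c hcM
            have hd2 : d ^ 2 = 1 := by
              have hcomm : Commute c⁻¹ (h * c * h⁻¹) := by
                rw [hxc]
                exact (Commute.refl c).inv_left.mul_right (hdcen c⁻¹).symm
              have e1 : (h * c * h⁻¹) ^ 2 = h * c ^ 2 * h⁻¹ := conj_pow
              have e2 : h * c ^ 2 * h⁻¹ = c ^ 2 := by
                calc h * c ^ 2 * h⁻¹ = (c ^ 2 * h) * h⁻¹ := by rw [← (hc2cen h).eq]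
                  _ = c ^ 2 := by group
              rw [hd, hcomm.mul_pow, inv_pow, e1, e2]
              simp
            have hcp := comm_pow h g c d rfl hxc hdcen 4
            have hch4 : (4 : ℕ).choose 2 = 6 := by decide
            have e6 : d ^ 6 = (d ^ 2) ^ 3 := by rw [← pow_mul]
            have : ⁅h ^ 4, g⁆ = 1 := by
              rw [hcp, hch4, hc4, e6, hd2]
              simp
            exact commutatorElement_eq_one_iff_commute.1 this
          intro m hm g
          have hm' : m ∈ Subgroup.closure {x : G | ∃ h ∈ N, h ^ 4 = x} := hm
          clear hm
          induction hm' using closure_induction with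
          | mem x hx => exact hgen x hx g
          | one => exact Commute.one_left g
          | mul a b _ _ ha hb => exact ha.mul_left hb
          | inv a _ ha => exact ha.inv_left
        have : W = ⊥ := comm_le_bot_of_central hM4cen
        rw [this]
        exact bot_le
      · -- quotient reduction
        let π := QuotientGroup.mk' K
        have hπ : Function.Surjective π := QuotientGroup.mk'_surjective K
        have hcard' : Nat.card (G ⧸ K) ≤ n := by
          have := card_quot_lt K hKbot
          omega
        have hmaptop : Subgroup.map π ⊤ = ⊤ := Subgroup.map_top_of_surjective π hπ
        have hhyp : ⁅Subgroup.map π N, (⊤ : Subgroup (G ⧸ K))⁆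
            ≤ subgroupPow (Subgroup.map π N) 4 := by
          have := Subgroup.map_mono (f := π) hN
          rwa [Subgroup.map_commutator, hmaptop, map_spow π] at this
        have hconc := ih (G ⧸ K) (hG.to_quotient K) hcard' (Subgroup.map π N) hhyp
        rw [← map_spow π, ← map_spow π, ← map_spow π, ← hmaptop,
          ← Subgroup.map_commutator] at hconc
        have hWTK : W ≤ T ⊔ K := by
          calc W ≤ Subgroup.comap π (Subgroup.map π W) := Subgroup.le_comap_map π W
            _ ≤ Subgroup.comap π (Subgroup.map π T) := Subgroup.comap_mono hconc
            _ = T ⊔ π.ker := Subgroup.comap_map_eq π T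
            _ = T ⊔ K := by rw [QuotientGroup.ker_mk']
        have hWTW : W ≤ T ⊔ ⁅W, (⊤ : Subgroup G)⁆ := by
          rw [hK] at hWTK
          rwa [← sup_assoc, sup_idem] at hWTK
        exact frattini_absorb hG.isNilpotent T W hTnormal hWnormal hWTW


/-- DDMS p=2: if `N` is powerfully embedded then so is `N^2`. -/
theorem t22 : ∀ (n : ℕ) (G : Type u) [Group G] [Finite G],
    IsPGroup 2 G → Nat.card G ≤ n → ∀ N : Subgroup G,
    ⁅N, (⊤ : Subgroup G)⁆ ≤ subgroupPow N 4 →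
    ⁅subgroupPow N 2, (⊤ : Subgroup G)⁆ ≤ subgroupPow (subgroupPow N 2) 4 := by
  intro n
  induction n with
  | zero => intro G _ _ _ hcard _ _; exact absurd (Nat.card_pos.trans_le hcard) (by simp)
  | succ n ih =>
      intro G _ _ hG hcard N hN
      haveI : Fact (Nat.Prime 2) := ⟨Nat.prime_two⟩
      have hNnormal : N.Normal := normal_of_comm_le (le_trans hN (spow_le N 4))
      set M4 := subgroupPow N 4 with hM4
      set M2 := subgroupPow N 2 with hM2
      set T := subgroupPow M2 4 with hT
      set W := ⁅M2, (⊤ : Subgroup G)⁆ with hW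
      haveI hM4normal : M4.Normal := spow_normal hNnormal 4
      haveI hM2normal : M2.Normal := spow_normal hNnormal 2
      haveI hTnormal : T.Normal := spow_normal hM2normal 4
      haveI hWnormal : W.Normal := Subgroup.commutator_normal M2 ⊤
      haveI hW'normal : (⁅W, (⊤ : Subgroup G)⁆).Normal := Subgroup.commutator_normal W ⊤
      haveI hW4normal : (⁅M4, (⊤ : Subgroup G)⁆).Normal := Subgroup.commutator_normal M4 ⊤
      have h8T : subgroupPow N 8 ≤ T := by
        have := spow_spow_le N 2 4
        norm_num at this
        exact this
      set K := T ⊔ ⁅W, (⊤ : Subgroup G)⁆ ⊔ ⁅M4, (⊤ : Subgroup G)⁆ with hK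
      haveI hKnormal : K.Normal := Subgroup.sup_normal _ _
      by_cases hKbot : K = ⊥
      · have hTbot : T = ⊥ :=
          le_bot_iff.1 (hKbot ▸ (le_sup_of_le_left le_sup_left : T ≤ K))
        have hW4bot : ⁅M4, (⊤ : Subgroup G)⁆ = ⊥ :=
          le_bot_iff.1 (hKbot ▸ (le_sup_right : ⁅M4, (⊤ : Subgroup G)⁆ ≤ K))
        have h8bot : subgroupPow N 8 = ⊥ := le_bot_iff.1 (hTbot ▸ h8T)
        have hM4cen : ∀ w ∈ M4, ∀ g : G, Commute w g := fun w hw g =>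
          commute_of_le_bot hW4bot hw g
        -- every element of M4 squares to 1
        have hQ : ∀ v ∈ M4, v ^ 2 = 1 := by
          intro v hv
          have hv' : v ∈ Subgroup.closure {x : G | ∃ h ∈ N, h ^ 4 = x} := hv
          clear hv
          induction hv' using closure_induction with
          | mem x hx =>
              obtain ⟨h, hh, rfl⟩ := hx
              have h8 : h ^ 8 = 1 := spow_eq_one hh h8bot
              have e : (h ^ 4) ^ 2 = h ^ 8 := by rw [← pow_mul]
              rw [e, h8]
          | one => exact one_pow 2
          | mul a b ha hb iha ihb =>
              have hcomm : Commute a b := hM4cen a ha b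
              rw [hcomm.mul_pow, iha, ihb, one_mul]
          | inv a ha iha => rw [inv_pow, iha, inv_one]
        -- M2 is central
        have hM2cen : ∀ x ∈ {x : G | ∃ h ∈ N, h ^ 2 = x}, ∀ g : G, Commute x g := by
          rintro x ⟨h, hh, rfl⟩ g
          set c := ⁅h, g⁆ with hc
          have hcM : c ∈ M4 := hN (commutator_mem_commutator hh (mem_top g))
          have hccen : ∀ g' : G, Commute c g' := hM4cen c hcM
          have hxc : h * c * h⁻¹ = c * 1 := by
            rw [mul_one]
            calc h * c * h⁻¹ = (c * h) * h⁻¹ := by rw [← (hccen h).eq]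
              _ = c := by group
          have hcp := comm_pow h g c 1 rfl hxc (fun g' => Commute.one_left g') 2
          have hch2 : (2 : ℕ).choose 2 = 1 := by decide
          have : ⁅h ^ 2, g⁆ = 1 := by
            rw [hcp, hch2, one_pow, mul_one, hQ c hcM]
          exact commutatorElement_eq_one_iff_commute.1 this
        have hcen : ∀ m ∈ M2, ∀ g : G, Commute m g := by
          intro m hm g
          have hm' : m ∈ Subgroup.closure {x : G | ∃ h ∈ N, h ^ 2 = x} := hm
          clear hm
          induction hm' using closure_induction with
          | mem x hx => exact hM2cen x hx g
          | one => exact Commute.one_left g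
          | mul a b _ _ ha hb => exact ha.mul_left hb
          | inv a _ ha => exact ha.inv_left
        have : W = ⊥ := comm_le_bot_of_central hcen
        rw [this]
        exact bot_le
      · -- quotient reduction
        let π := QuotientGroup.mk' K
        have hπ : Function.Surjective π := QuotientGroup.mk'_surjective K
        have hcard' : Nat.card (G ⧸ K) ≤ n := by
          have := card_quot_lt K hKbot
          omega
        have hmaptop : Subgroup.map π ⊤ = ⊤ := Subgroup.map_top_of_surjective π hπ
        have hhyp : ⁅Subgroup.map π N, (⊤ : Subgroup (G ⧸ K))⁆
            ≤ subgroupPow (Subgroup.map π N) 4 := by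
          have := Subgroup.map_mono (f := π) hN
          rwa [Subgroup.map_commutator, hmaptop, map_spow π] at this
        have hconc := ih (G ⧸ K) (hG.to_quotient K) hcard' (Subgroup.map π N) hhyp
        rw [← map_spow π N 2, ← map_spow π (subgroupPow N 2) 4, ← hmaptop,
          ← Subgroup.map_commutator] at hconc
        have hWTK : W ≤ T ⊔ K := by
          calc W ≤ Subgroup.comap π (Subgroup.map π W) := Subgroup.le_comap_map π W
            _ ≤ Subgroup.comap π (Subgroup.map π T) := Subgroup.comap_mono hconc
            _ = T ⊔ π.ker := Subgroup.comap_map_eq π T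
            _ = T ⊔ K := by rw [QuotientGroup.ker_mk']
        -- absorb [M4, G] ≤ T using l2
        have hl2 : ⁅M4, (⊤ : Subgroup G)⁆ ≤ T :=
          l2 (Nat.card G) G hG le_rfl N hN
        have hWTW : W ≤ T ⊔ ⁅W, (⊤ : Subgroup G)⁆ := by
          refine le_trans hWTK ?_
          rw [hK]
          refine sup_le le_sup_left (sup_le (sup_le ?_ ?_) ?_)
          · exact le_sup_of_le_left le_rfl
          · exact le_sup_right
          · exact le_sup_of_le_left hl2
        exact frattini_absorb hG.isNilpotent T W hTnormal hWnormal hWTW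

end T2




section T3

theorem spow_mul_le {G : Type u} [Group G] (H : Subgroup G) (m k : ℕ) :
    subgroupPow H (m * k) ≤ subgroupPow H k := by
  refine (Subgroup.closure_le _).2 ?_
  rintro x ⟨h, hh, rfl⟩
  rw [pow_mul]
  exact mem_spow (pow_mem hh m) k

/-- `G^p` is generated by the `p`-th powers of any generating set, for powerful `G`. -/
theorem t3 (p : ℕ) (hp : p.Prime) : ∀ (n : ℕ) (G : Type u) [Group G] [Finite G],
    IsPGroup p G → Nat.card G ≤ n → ∀ S : Set G,
    Subgroup.closure S = ⊤ →
    ⁅(⊤ : Subgroup G), (⊤ : Subgroup G)⁆ ≤ subgroupPow ⊤ (if p = 2 then 4 else p) →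
    subgroupPow (⊤ : Subgroup G) p = Subgroup.closure ((· ^ p) '' S) := by
  intro n
  induction n with
  | zero => intro G _ _ _ hcard _ _ _; exact absurd (Nat.card_pos.trans_le hcard) (by simp)
  | succ n ih =>
      intro G _ _ hG hcard S hS hpow
      haveI : Fact p.Prime := ⟨hp⟩
      set V := subgroupPow (⊤ : Subgroup G) p with hV
      set H := Subgroup.closure ((· ^ p) '' S) with hH
      have hHV : H ≤ V := by
        rw [hH]
        refine (Subgroup.closure_le _).2 ?_
        rintro x ⟨s, hs, rfl⟩
        exact mem_spow (Subgroup.mem_top s) p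
      have hcommV : ⁅(⊤ : Subgroup G), (⊤ : Subgroup G)⁆ ≤ V := by
        by_cases h2 : p = 2
        · subst h2
          rw [if_pos rfl] at hpow
          exact le_trans hpow (spow_mul_le ⊤ 2 2)
        · rw [if_neg h2] at hpow
          exact hpow
      have hVcomm : ⁅V, (⊤ : Subgroup G)⁆ ≤ subgroupPow V p := by
        by_cases h2 : p = 2
        · subst h2
          rw [if_pos rfl] at hpow
          have := t22 (Nat.card G) G hG le_rfl ⊤ hpow
          exact le_trans this (spow_mul_le (subgroupPow ⊤ 2) 2 2)
        · rw [if_neg h2] at hpow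
          exact t2odd p hp h2 (Nat.card G) G hG le_rfl ⊤ hpow
      set K := subgroupPow V p with hK
      haveI hVnormal : V.Normal := spow_normal (by infer_instance) p
      haveI hKnormal : K.Normal := spow_normal hVnormal p
      by_cases hKbot : K = ⊥
      · -- direct case: the p-th power map is a homomorphism
        have hVcen : ∀ v ∈ V, ∀ g : G, Commute v g := by
          intro v hv g
          have : ⁅V, (⊤ : Subgroup G)⁆ = ⊥ := le_bot_iff.1 (hKbot ▸ hVcomm)
          exact commute_of_le_bot this hv g
        have hmapmul : ∀ a b : G, (a * b) ^ p = a ^ p * b ^ p := by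
          intro a b
          set c := b⁻¹ * a⁻¹ * b * a with hc
          have hcV : c ∈ V := by
            have : c = ⁅b⁻¹, a⁻¹⁆ := by rw [hc]; simp only [commutatorElement_def]; group
            rw [this]
            exact hcommV (Subgroup.commutator_mem_commutator (Subgroup.mem_top b⁻¹)
              (Subgroup.mem_top a⁻¹))
          have hccen : ∀ g : G, Commute c g := hVcen c hcV
          have hmul : b * a = a * b * c := by rw [hc]; group
          have hcp : c ^ p = 1 := spow_eq_one hcV hKbot
          have := mul_pow_central a b c hmul (hccen a) (hccen b) p
          have hchoose : c ^ (p.choose 2) = 1 := by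
            by_cases h2 : p = 2
            · subst h2
              have hc1 : c = 1 := by
                have h4 : subgroupPow (⊤ : Subgroup G) 4 ≤ K := by
                  rw [hK, hV]
                  have := spow_spow_le (⊤ : Subgroup G) 2 2
                  norm_num at this
                  exact this
                have : c ∈ K := h4 (by
                  rw [if_pos rfl] at hpow
                  refine hpow ?_
                  have : c = ⁅b⁻¹, a⁻¹⁆ := by
                    rw [hc]; simp only [commutatorElement_def]; group
                  rw [this]
                  exact Subgroup.commutator_mem_commutator (Subgroup.mem_top b⁻¹)
                    (Subgroup.mem_top a⁻¹))
                rw [hKbot, Subgroup.mem_bot] at this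
                exact this
              rw [hc1, one_pow]
            · obtain ⟨k, hk⟩ := hp.odd_of_ne_two h2
              have hdvd : 2 ∣ (p - 1) := ⟨k, by omega⟩
              rw [Nat.choose_two_right, Nat.mul_div_assoc p hdvd, pow_mul, hcp, one_pow]
          rw [this, hchoose, mul_one]
        let φ : G →* G := { toFun := fun g => g ^ p,
                            map_one' := one_pow p,
                            map_mul' := hmapmul }
        apply le_antisymm _ hHV
        rw [hV, subgroupPow]
        refine (Subgroup.closure_le _).2 ?_
        rintro x ⟨h, -, rfl⟩
        have h1 : (h : G) ^ p = φ h := rfl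
        have h2 : φ h ∈ Subgroup.map φ (Subgroup.closure S) := by
          rw [hS]
          exact Subgroup.mem_map_of_mem φ (Subgroup.mem_top h)
        rw [MonoidHom.map_closure] at h2
        have h3 : (⇑φ '' S) = ((· ^ p) '' S) := rfl
        rw [h3] at h2
        rw [h1]
        exact h2
      · -- quotient case
        let π := QuotientGroup.mk' K
        have hπ : Function.Surjective π := QuotientGroup.mk'_surjective K
        have hcard' : Nat.card (G ⧸ K) ≤ n := by
          have := card_quot_lt K hKbot
          omega
        have hmaptop : Subgroup.map π ⊤ = ⊤ := Subgroup.map_top_of_surjective π hπ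
        have hS' : Subgroup.closure (⇑π '' S) = ⊤ := by
          rw [← MonoidHom.map_closure, hS, hmaptop]
        have hpow' : ⁅(⊤ : Subgroup (G ⧸ K)), (⊤ : Subgroup (G ⧸ K))⁆
            ≤ subgroupPow ⊤ (if p = 2 then 4 else p) := by
          have := Subgroup.map_mono (f := π) hpow
          rwa [Subgroup.map_commutator, hmaptop, map_spow π, hmaptop] at this
        have hIH := ih (G ⧸ K) (hG.to_quotient K) hcard' (⇑π '' S) hS' hpow'
        have himg : ((· ^ p) '' (⇑π '' S)) = ⇑π '' ((· ^ p) '' S) := by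
          ext y
          constructor
          · rintro ⟨z, ⟨s, hs, rfl⟩, rfl⟩
            exact ⟨s ^ p, ⟨s, hs, rfl⟩, (map_pow π s p).symm⟩
          · rintro ⟨z, ⟨s, hs, rfl⟩, rfl⟩
            exact ⟨π s, ⟨s, hs, rfl⟩, (map_pow π s p).symm⟩
        have hmapV : Subgroup.map π V = Subgroup.map π H := by
          rw [hV, map_spow π, hmaptop, hIH, himg, hH, MonoidHom.map_closure]
        have hVHK : V ≤ H ⊔ K := by
          calc V ≤ Subgroup.comap π (Subgroup.map π V) := Subgroup.le_comap_map π V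
            _ = Subgroup.comap π (Subgroup.map π H) := by rw [hmapV]
            _ = H ⊔ π.ker := Subgroup.comap_map_eq π H
            _ = H ⊔ K := by rw [QuotientGroup.ker_mk']
        -- now use the nongenerator lemma inside V
        have hsub : V ≤ H ⊔ subgroupPow V p := hVHK
        have hHsubV : H ⊓ V = V := by
          have hinj : Function.Injective V.subtype := V.subtype_injective
          have hint : Subgroup.map V.subtype (Subgroup.subgroupOf H V ⊔
              subgroupPow (⊤ : Subgroup ↥V) p) = H ⊓ V ⊔ subgroupPow V p := by
            rw [Subgroup.map_sup, Subgroup.subgroupOf_map_subtype, map_spow V.subtype,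
              ← MonoidHom.range_eq_map, Subgroup.range_subtype]
          have htople : (⊤ : Subgroup ↥V) ≤ Subgroup.subgroupOf H V ⊔
              subgroupPow (⊤ : Subgroup ↥V) p := by
            rw [← Subgroup.map_le_map_iff_of_injective hinj, hint,
              ← MonoidHom.range_eq_map, Subgroup.range_subtype]
            refine le_trans hsub ?_
            exact sup_le (le_trans (le_inf le_rfl hHV) le_sup_left) le_sup_right
          have := ng p hp (Nat.card ↥V) ↥V (hG.to_subgroup V) le_rfl
            (Subgroup.subgroupOf H V) htople
          have hmapeq : Subgroup.map V.subtype (Subgroup.subgroupOf H V)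
              = Subgroup.map V.subtype ⊤ := by rw [this]
          rwa [Subgroup.subgroupOf_map_subtype, ← MonoidHom.range_eq_map,
            Subgroup.range_subtype] at hmapeq
        apply le_antisymm _ hHV
        intro v hv
        have : v ∈ H ⊓ V := hHsubV.symm ▸ hv
        exact this.1

end T3


section Main

theorem list_merge {ι : Type*} {P : Type u} [Group P] (l : List ι) (f g : ι → P)
    (hg : ∀ i, ∀ y : P, Commute (g i) y) :
    (l.map f).prod * (l.map g).prod = (l.map fun i => f i * g i).prod := by
  induction l with
  | nil => simp
  | cons a t iht =>
      simp only [List.map_cons, List.prod_cons]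
      calc f a * (t.map f).prod * (g a * (t.map g).prod)
          = f a * ((t.map f).prod * g a) * (t.map g).prod := by simp [mul_assoc]
        _ = f a * (g a * (t.map f).prod) * (t.map g).prod := by rw [← (hg a _).eq]
        _ = (f a * g a) * ((t.map f).prod * (t.map g).prod) := by simp [mul_assoc]
        _ = (f a * g a) * (t.map fun i => f i * g i).prod := by rw [iht]

theorem list_single {ι : Type*} {P : Type u} [Group P] :
    ∀ (l : List ι), l.Nodup → ∀ (i : ι), i ∈ l → ∀ (h : ι → P), (∀ j ∈ l, j ≠ i → h j = 1) →
    (l.map h).prod = h i := by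
  intro l
  induction l with
  | nil => intro _ i hi; cases hi
  | cons a t iht =>
      intro hnd i hi h h1
      simp only [List.map_cons, List.prod_cons]
      rcases List.mem_cons.mp hi with rfl | hit
      · have hone : ∀ j ∈ t, h j = 1 := fun j hj =>
          h1 j (List.mem_cons_of_mem _ hj)
            (fun e => (List.nodup_cons.mp hnd).1 (e ▸ hj))
        have : (t.map h).prod = 1 := by
          refine List.prod_eq_one ?_
          rintro y hy
          obtain ⟨j, hj, rfl⟩ := List.mem_map.mp hy
          exact hone j hj
        rw [this, mul_one]
      · have hne : a ≠ i := fun e => (List.nodup_cons.mp hnd).1 (e ▸ hit)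
        rw [h1 a (List.mem_cons_self) hne, one_mul]
        exact iht (List.nodup_cons.mp hnd).2 i hit h
          (fun j hj => h1 j (List.mem_cons_of_mem _ hj))

/-- relative version of t3 for a subgroup given as a closure -/
theorem t3_subgroup (p : ℕ) (hp : p.Prime) (P : Type u) [Group P] [Finite P]
    (hP : IsPGroup p P) (S : Set P)
    (hpe : ⁅Subgroup.closure S, (⊤ : Subgroup P)⁆
      ≤ subgroupPow (Subgroup.closure S) (if p = 2 then 4 else p)) :
    subgroupPow (Subgroup.closure S) p = Subgroup.closure ((· ^ p) '' S) := by
  set N := Subgroup.closure S with hN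
  set S' : Set ↥N := (((↑) : ↥N → P) ⁻¹' S) with hS'def
  have hS' : Subgroup.closure S' = ⊤ := Subgroup.closure_closure_coe_preimage
  have hPN : IsPGroup p ↥N := hP.to_subgroup N
  have hmaptopN : Subgroup.map N.subtype ⊤ = N := by
    rw [← MonoidHom.range_eq_map, Subgroup.range_subtype]
  have hpow' : ⁅(⊤ : Subgroup ↥N), (⊤ : Subgroup ↥N)⁆
      ≤ subgroupPow ⊤ (if p = 2 then 4 else p) := by
    rw [← Subgroup.map_le_map_iff_of_injective N.subtype_injective,
      Subgroup.map_commutator, hmaptopN, map_spow N.subtype, hmaptopN]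
    calc ⁅N, N⁆ ≤ ⁅N, ⊤⁆ := Subgroup.commutator_mono le_rfl le_top
      _ ≤ _ := hpe
  have ht3 := t3 p hp (Nat.card ↥N) ↥N hPN le_rfl S' hS' hpow'
  have h1 : Subgroup.map N.subtype (subgroupPow (⊤ : Subgroup ↥N) p) = subgroupPow N p := by
    rw [map_spow N.subtype, hmaptopN]
  have h2 : Subgroup.map N.subtype (Subgroup.closure ((· ^ p) '' S'))
      = Subgroup.closure ((· ^ p) '' S) := by
    rw [MonoidHom.map_closure]
    congr 1
    ext y
    constructor
    · rintro ⟨v, ⟨w, hw, rfl⟩, rfl⟩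
      exact ⟨(w : P), hw, by simp⟩
    · rintro ⟨s, hs, rfl⟩
      have hsN : s ∈ N := Subgroup.subset_closure hs
      exact ⟨(⟨s, hsN⟩ : ↥N) ^ p, ⟨⟨s, hsN⟩, hs, rfl⟩, by simp⟩
  rw [← h1, ht3, h2]

theorem main_aux (p : ℕ) (hp : p.Prime) : ∀ (n : ℕ) (P : Type u) [Group P] [Finite P],
    IsPGroup p P → Nat.card P ≤ n →
    ⁅(⊤ : Subgroup P), (⊤ : Subgroup P)⁆ ≤ subgroupPow ⊤ (if p = 2 then 4 else p) →
    ∀ (d : ℕ) (x : Fin d → P), Subgroup.closure (Set.range x) = ⊤ →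
    ∀ g : P, ∃ a : Fin d → ℤ, g = (((List.finRange d).map fun i => x i ^ a i)).prod := by
  intro n
  induction n with
  | zero => intro P _ _ _ hcard _ _ _ _ _; exact absurd (Nat.card_pos.trans_le hcard) (by simp)
  | succ n ih =>
      intro P _ _ hP hcard hpow d x hgen g
      by_cases htriv : Subsingleton P
      · exact ⟨0, Subsingleton.elim _ _⟩
      haveI : Nontrivial P := not_subsingleton_iff_nontrivial.mp htriv
      haveI : Fact p.Prime := ⟨hp⟩
      classical
      set Nk : ℕ → Subgroup P := fun k => (fun H => subgroupPow H p)^[k] ⊤ with hNk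
      have hNk0 : Nk 0 = ⊤ := rfl
      have hNsucc : ∀ k, Nk (k+1) = subgroupPow (Nk k) p := by
        intro k
        rw [hNk]
        simp [Function.iterate_succ_apply']
      have hchain : ∀ k,
          (⁅Nk k, (⊤ : Subgroup P)⁆ ≤ subgroupPow (Nk k) (if p = 2 then 4 else p)) ∧
          Nk k = Subgroup.closure ((· ^ (p ^ k)) '' Set.range x) := by
        intro k
        induction k with
        | zero =>
            constructor
            · rw [hNk0]; exact hpow
            · rw [hNk0, ← hgen]
              congr 1
              ext y
              constructor
              · intro hy; exact ⟨y, hy, by simp⟩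
              · rintro ⟨s, hs, rfl⟩; simpa using hs
        | succ k ihk =>
            obtain ⟨hpe, hGEN⟩ := ihk
            constructor
            · rw [hNsucc]
              by_cases h2 : p = 2
              · subst h2
                rw [if_pos rfl] at hpe ⊢
                exact t22 (Nat.card P) P hP le_rfl (Nk k) hpe
              · rw [if_neg h2] at hpe ⊢
                exact t2odd p hp h2 (Nat.card P) P hP le_rfl (Nk k) hpe
            · rw [hNsucc]
              have ht := t3_subgroup p hp P hP ((· ^ (p ^ k)) '' Set.range x)
                (by rw [← hGEN]; exact hpe)
              rw [hGEN, ht]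
              congr 1
              ext y
              constructor
              · rintro ⟨z, ⟨s, hs, rfl⟩, rfl⟩
                refine ⟨s, hs, ?_⟩
                show s ^ p ^ (k + 1) = (s ^ p ^ k) ^ p
                rw [← pow_mul, pow_succ]
              · rintro ⟨s, hs, rfl⟩
                refine ⟨s ^ (p ^ k), ⟨s, hs, rfl⟩, ?_⟩
                show (s ^ p ^ k) ^ p = s ^ p ^ (k + 1)
                rw [← pow_mul, pow_succ]
      obtain ⟨e, he⟩ := IsPGroup.iff_card.1 hP
      have hNe : Nk e = ⊥ := by
        rw [(hchain e).2, eq_bot_iff]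
        refine (Subgroup.closure_le _).2 ?_
        rintro y ⟨s, hs, rfl⟩
        have : s ^ (p ^ e) = 1 := by rw [← he]; exact pow_card_eq_one'
        simp [this]
      have hex : ∃ k, Nk k = ⊥ := ⟨e, hNe⟩
      set m0 := Nat.find hex with hm0def
      have hm0 : Nk m0 = ⊥ := Nat.find_spec hex
      have hm0pos : m0 ≠ 0 := by
        intro h0
        rw [h0, hNk0] at hm0
        obtain ⟨u, v, huv⟩ := exists_pair_ne P
        apply huv
        have hu : u ∈ (⊥ : Subgroup P) := hm0 ▸ Subgroup.mem_top u
        have hv : v ∈ (⊥ : Subgroup P) := hm0 ▸ Subgroup.mem_top v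
        rw [Subgroup.mem_bot] at hu hv
        rw [hu, hv]
      set m := m0 - 1 with hmdef
      have hmsucc : m + 1 = m0 := by omega
      have hZne : Nk m ≠ ⊥ := Nat.find_min hex (by omega)
      set Z := Nk m with hZdef
      have hZpe := (hchain m).1
      have hZgen := (hchain m).2
      have hZsuccbot : subgroupPow Z p = ⊥ := by
        rw [← hNsucc, hmsucc]; exact hm0
      have hle : ⁅Z, (⊤ : Subgroup P)⁆ ≤ (⊥ : Subgroup P) := by
        refine le_trans hZpe ?_
        by_cases h2 : p = 2
        · subst h2
          rw [if_pos rfl, ← hZsuccbot]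
          exact spow_mul_le Z 2 2
        · rw [if_neg h2, hZsuccbot]
      have hZcen : ∀ z ∈ Z, ∀ g' : P, Commute z g' :=
        fun z hz g' => commute_of_le_bot (le_bot_iff.1 hle) hz g'
      haveI hZnormal : Z.Normal := normal_of_comm_le (le_trans hle bot_le)
      let π := QuotientGroup.mk' Z
      have hπ : Function.Surjective π := QuotientGroup.mk'_surjective Z
      have hcard' : Nat.card (P ⧸ Z) ≤ n := by
        have := card_quot_lt Z hZne
        omega
      have hmaptop : Subgroup.map π ⊤ = ⊤ := Subgroup.map_top_of_surjective π hπ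
      have hpow' : ⁅(⊤ : Subgroup (P ⧸ Z)), (⊤ : Subgroup (P ⧸ Z))⁆
          ≤ subgroupPow ⊤ (if p = 2 then 4 else p) := by
        have := Subgroup.map_mono (f := π) hpow
        rwa [Subgroup.map_commutator, hmaptop, map_spow π, hmaptop] at this
      have hgen' : Subgroup.closure (Set.range (⇑π ∘ x)) = ⊤ := by
        rw [Set.range_comp, ← MonoidHom.map_closure, hgen, hmaptop]
      obtain ⟨a, ha⟩ := ih (P ⧸ Z) (hP.to_quotient Z) hcard' hpow' d (⇑π ∘ x) hgen' (π g)
      set w : P := ((List.finRange d).map fun i => x i ^ a i).prod with hw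
      have hπw : π w = ((List.finRange d).map fun i => (⇑π ∘ x) i ^ a i).prod := by
        rw [hw, MonoidHom.map_list_prod, List.map_map]
        refine congrArg List.prod ?_
        refine List.map_congr_left ?_
        intro i _
        exact map_zpow π (x i) (a i)
      have hzmem : w⁻¹ * g ∈ Z := by
        have h1 : π (w⁻¹ * g) = 1 := by
          rw [map_mul, map_inv, hπw, ← ha]
          group
        have h2 : w⁻¹ * g ∈ π.ker := h1
        rwa [QuotientGroup.ker_mk'] at h2
      have hZelem : ∀ i : Fin d, (x i) ^ ((p ^ m : ℕ) : ℤ) ∈ Z := by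
        intro i
        rw [zpow_natCast, hZdef, hZgen]
        exact Subgroup.subset_closure ⟨x i, Set.mem_range_self i, rfl⟩
      have hgc : ∀ (i : Fin d) (t : ℤ), ∀ y : P,
          Commute (x i ^ (((p ^ m : ℕ) : ℤ) * t)) y := by
        intro i t y
        have h1 : x i ^ (((p ^ m : ℕ) : ℤ) * t) ∈ Z := by
          rw [zpow_mul]
          exact Z.zpow_mem (hZelem i) t
        exact hZcen _ h1 y
      have hexpr : ∀ y ∈ Subgroup.closure ((· ^ (p ^ m)) '' Set.range x),
          ∃ b : Fin d → ℤ,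
          y = ((List.finRange d).map fun i => x i ^ (((p ^ m : ℕ) : ℤ) * b i)).prod := by
        intro y hy
        induction hy using Subgroup.closure_induction with
        | mem y hy =>
            obtain ⟨s, ⟨i, rfl⟩, rfl⟩ := hy
            refine ⟨Pi.single i 1, ?_⟩
            rw [list_single (List.finRange d) (List.nodup_finRange d) i (List.mem_finRange i) _
              ?_]
            · rw [Pi.single_eq_same, mul_one, zpow_natCast]
            · intro j _ hne
              rw [Pi.single_eq_of_ne hne, mul_zero, zpow_zero]
        | one =>
            refine ⟨0, ?_⟩
            symm
            refine List.prod_eq_one ?_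
            rintro y hy
            obtain ⟨j, _, rfl⟩ := List.mem_map.mp hy
            simp
        | mul u v _ _ ihu ihv =>
            obtain ⟨b1, rfl⟩ := ihu
            obtain ⟨b2, rfl⟩ := ihv
            refine ⟨b1 + b2, ?_⟩
            rw [list_merge _ _ _ (fun i y => hgc i (b2 i) y)]
            congr 1
            refine List.map_congr_left ?_
            intro i _
            rw [← zpow_add]
            congr 1
            simp [mul_add]
        | inv u _ ihu =>
            obtain ⟨b1, rfl⟩ := ihu
            refine ⟨-b1, ?_⟩
            have hprod : ((List.finRange d).map fun i =>
                x i ^ (((p ^ m : ℕ) : ℤ) * b1 i)).prod *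
                ((List.finRange d).map fun i =>
                x i ^ (((p ^ m : ℕ) : ℤ) * (-b1) i)).prod = 1 := by
              rw [list_merge _ _ _ (fun i y => hgc i ((-b1) i) y)]
              refine List.prod_eq_one ?_
              rintro y hy
              obtain ⟨j, _, rfl⟩ := List.mem_map.mp hy
              rw [← zpow_add]
              have : ((p ^ m : ℕ) : ℤ) * b1 j + ((p ^ m : ℕ) : ℤ) * (-b1) j = 0 := by
                simp
              rw [this, zpow_zero]
            exact (inv_eq_of_mul_eq_one_right hprod)
      obtain ⟨b, hb⟩ := hexpr (w⁻¹ * g) (by rw [← hZgen, ← hZdef]; exact hzmem)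
      refine ⟨fun i => a i + ((p ^ m : ℕ) : ℤ) * b i, ?_⟩
      have hg : g = w * (w⁻¹ * g) := by group
      rw [hg, hb, hw, list_merge _ _ _ (fun i y => hgc i (b i) y)]
      congr 1
      refine List.map_congr_left ?_
      intro i _
      rw [← zpow_add]

end Main

end PfAux


/-- A powerful finite `p`-group generated by `x₁, ..., x_d` is the product of
the cyclic subgroups `⟨xᵢ⟩`: every element is `x₁^{a₁} ⋯ x_d^{a_d}`. -/
theorem powerful_product_of_cyclic
    (p : ℕ) (hp : p.Prime)
    (P : Type*) [Group P] [Finite P] (hP : IsPGroup p P)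
    (hpowerful : ⁅(⊤ : Subgroup P), (⊤ : Subgroup P)⁆ ≤
      subgroupPow ⊤ (if p = 2 then 4 else p))
    (d : ℕ) (x : Fin d → P) (hgen : Subgroup.closure (Set.range x) = ⊤) :
    ∀ g : P, ∃ a : Fin d → ℤ,
      g = (((List.finRange d).map fun i => x i ^ a i)).prod := by
  exact PfAux.main_aux p hp (Nat.card P) P hP le_rfl hpowerful d x hgen
end

section
/- Let L be a Lie ring and H a subring generated by m elements h_1, ..., h_m such that every Lie commutator in the h_i is ad-nilpotent in L of index at most n. If H is nilpotent of class c, then there exists u, bounded in terms of c, m, n only, such that [L, H, H, ..., H] = 0 with u copies of H. -/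
inductive IsLieCommOf {L : Type*} [LieRing L] (S : Set L) : L → Prop
  | base : ∀ x ∈ S, IsLieCommOf S x
  | bracket : ∀ x y, IsLieCommOf S x → IsLieCommOf S y → IsLieCommOf S ⁅x, y⁆

namespace EngelSink

variable {L : Type*} [LieRing L]

/-- left-normed fold of brackets -/
def lf (y : L) (l : List L) : L := l.foldl (fun z w => ⁅z, w⁆) y

@[simp] lemma lf_nil (y : L) : lf y [] = y := rfl

@[simp] lemma lf_cons (y a : L) (l : List L) : lf y (a :: l) = lf ⁅y, a⁆ l := rfl

lemma lf_append (y : L) (l1 l2 : List L) : lf y (l1 ++ l2) = lf (lf y l1) l2 :=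
  List.foldl_append ..

@[simp] lemma lf_zero (l : List L) : lf (0 : L) l = 0 := by
  induction l with
  | nil => rfl
  | cons a l ih => simp [lf_cons, ih]

lemma lf_add (p q : L) (l : List L) : lf (p + q) l = lf p l + lf q l := by
  induction l generalizing p q with
  | nil => rfl
  | cons a l ih => simp [lf_cons, add_lie, ih]

lemma lf_smul (z : ℤ) (p : L) (l : List L) : lf (z • p) l = z • lf p l := by
  induction l generalizing p with
  | nil => rfl
  | cons a l ih => simp [lf_cons, smul_lie, ih]

lemma lf_zero_mem {l : List L} (h : (0 : L) ∈ l) (y : L) : lf y l = 0 := by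
  induction l generalizing y with
  | nil => simp at h
  | cons a l ih =>
    rcases List.mem_cons.mp h with h | h
    · subst h; simp [lf_cons]
    · simp [lf_cons, ih h]

lemma lf_replicate (y x : L) (n : ℕ) :
    lf y (List.replicate n x) = (fun z => ⁅z, x⁆)^[n] y := by
  induction n generalizing y with
  | zero => rfl
  | succ n ih =>
    rw [List.replicate_succ, lf_cons, ih, Function.iterate_succ_apply]

lemma lie_lie_swap (u a b : L) : ⁅⁅u, a⁆, b⁆ = ⁅⁅u, b⁆, a⁆ + ⁅u, ⁅a, b⁆⁆ := by
  have h := leibniz_lie u a b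
  have h2 : ⁅a, ⁅u, b⁆⁆ = -⁅⁅u, b⁆, a⁆ := (lie_skew _ _).symm
  rw [h2] at h
  rw [h]
  abel

lemma lie_mem_span_span {A B : Set L} {p q : L}
    (hp : p ∈ Submodule.span ℤ A) (hq : q ∈ Submodule.span ℤ B) :
    ⁅p, q⁆ ∈ Submodule.span ℤ {z | ∃ a ∈ A, ∃ b ∈ B, z = ⁅a, b⁆} := by
  induction hp using Submodule.span_induction with
  | mem a ha =>
    induction hq using Submodule.span_induction with
    | mem b hb => exact Submodule.subset_span ⟨a, ha, b, hb, rfl⟩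
    | zero => simp
    | add x y _ _ hx hy => rw [lie_add]; exact add_mem hx hy
    | smul t x _ hx => rw [lie_smul]; exact Submodule.smul_mem _ t hx
  | zero => simp
  | add x y _ _ hx hy => rw [add_lie]; exact add_mem hx hy
  | smul t x _ hx => rw [smul_lie]; exact Submodule.smul_mem _ t hx

/-- commutators with weight -/
inductive CommW (S : Set L) : ℕ → L → Prop
  | base : ∀ x ∈ S, CommW S 1 x
  | br : ∀ {a b x y}, CommW S a x → CommW S b y → CommW S (a + b) ⁅x, y⁆

lemma CommW.isLieCommOf {S : Set L} {w : ℕ} {x : L} (h : CommW S w x) :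
    IsLieCommOf S x := by
  induction h with
  | base x hx => exact .base x hx
  | br _ _ ihx ihy => exact .bracket _ _ ihx ihy

lemma CommW.one_le {S : Set L} {w : ℕ} {x : L} (h : CommW S w x) : 1 ≤ w := by
  induction h with
  | base => exact le_refl 1
  | br _ _ ihx _ => omega

lemma CommW.mem_lieSpan {S : Set L} {w : ℕ} {x : L} (h : CommW S w x) :
    x ∈ LieSubalgebra.lieSpan ℤ L S := by
  induction h with
  | base x hx => exact LieSubalgebra.subset_lieSpan hx
  | br _ _ ihx ihy => exact LieSubalgebra.lie_mem _ ihx ihy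

/-- weighted lists -/
inductive WS (S : Set L) : List L → ℕ → Prop
  | nil : WS S [] 0
  | cons : ∀ {w x l W}, CommW S w x → WS S l W → WS S (x :: l) (w + W)

lemma WS.append {S : Set L} {l1 l2 : List L} {W1 W2 : ℕ}
    (h1 : WS S l1 W1) (h2 : WS S l2 W2) : WS S (l1 ++ l2) (W1 + W2) := by
  induction h1 with
  | nil => simpa using h2
  | cons hw _ ih =>
    rw [List.cons_append, add_assoc]
    exact WS.cons hw ih

lemma WS.split {S : Set L} {l1 l2 : List L} {W : ℕ} (h : WS S (l1 ++ l2) W) :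
    ∃ W1 W2, WS S l1 W1 ∧ WS S l2 W2 ∧ W = W1 + W2 := by
  induction l1 generalizing W with
  | nil => exact ⟨0, W, WS.nil, by simpa using h, (zero_add W).symm⟩
  | cons a l1 ih =>
    rw [List.cons_append] at h
    cases h with
    | cons hw hrest =>
      obtain ⟨W1, W2, h1, h2, rfl⟩ := ih hrest
      exact ⟨_ + W1, W2, WS.cons hw h1, h2, by omega⟩

lemma WS.cons_inv {S : Set L} {a : L} {l : List L} {W : ℕ} (h : WS S (a :: l) W) :
    ∃ w W', CommW S w a ∧ WS S l W' ∧ W = w + W' := by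
  cases h with
  | cons hw hrest => exact ⟨_, _, hw, hrest, rfl⟩

lemma WS.length_le {S : Set L} {l : List L} {W : ℕ} (h : WS S l W) : l.length ≤ W := by
  induction h with
  | nil => simp
  | cons hw _ ih => simp only [List.length_cons]; have := hw.one_le; omega

lemma WS.bound {S : Set L} {c : ℕ}
    (hvan : ∀ w x, CommW S w x → c < w → x = 0)
    {l : List L} {W : ℕ} (h : WS S l W) (hnz : ∀ x ∈ l, x ≠ 0) :
    W ≤ c * l.length ∧ ∀ x ∈ l, ∃ w, w ≤ c ∧ CommW S w x := by
  induction h with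
  | nil => simp
  | @cons w x l W hw hrest ih =>
    have hxl : ∀ z ∈ l, z ≠ 0 := fun z hz => hnz z (List.mem_cons_of_mem _ hz)
    obtain ⟨ihW, ihmem⟩ := ih hxl
    have hwc : w ≤ c := by
      by_contra hc
      exact hnz x List.mem_cons_self (hvan w x hw (by omega))
    constructor
    · simp only [List.length_cons]; nlinarith
    · intro z hz
      rcases List.mem_cons.mp hz with rfl | hz
      · exact ⟨w, hwc, hw⟩
      · exact ihmem z hz

section SortPart

variable (key : L → ℕ)

/-- number of inversions -/
def inv : List L → ℕ
  | [] => 0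
  | x :: t => t.countP (fun y => decide (key y < key x)) + inv t

lemma inv_le_sq : ∀ l : List L, inv key l ≤ l.length * l.length
  | [] => le_refl 0
  | x :: t => by
    have h1 := List.countP_le_length (p := fun y => decide (key y < key x)) (l := t)
    have h2 := inv_le_sq t
    simp only [inv, List.length_cons]
    nlinarith

lemma exists_violation : ∀ {l : List L},
    ¬ List.Chain' (fun a b => key a ≤ key b) l →
    ∃ l1 a b l2, l = l1 ++ a :: b :: l2 ∧ key b < key a := by
  intro l hl
  induction l with
  | nil => exact absurd (List.isChain_nil : List.Chain' (fun a b => key a ≤ key b) []) hl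
  | cons x t ih =>
    match t, hl with
    | [], hl => exact absurd (List.isChain_singleton x : List.Chain' (fun a b => key a ≤ key b) [x]) hl
    | y :: t, hl =>
      rw [show List.Chain' (fun a b => key a ≤ key b) (x :: y :: t) ↔ _ from List.isChain_cons_cons] at hl
      push_neg at hl
      by_cases hxy : key x ≤ key y
      · obtain ⟨l1, a, b, l2, heq, hba⟩ := ih (hl hxy)
        exact ⟨x :: l1, a, b, l2, by simp [heq], hba⟩
      · exact ⟨[], x, y, t, rfl, by omega⟩

lemma inv_swap {a b : L} (hba : key b < key a) : ∀ l1 l2 : List L,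
    inv key (l1 ++ b :: a :: l2) + 1 = inv key (l1 ++ a :: b :: l2) := by
  intro l1 l2
  induction l1 with
  | nil =>
    simp only [List.nil_append, inv, List.countP_cons, decide_eq_true_eq]
    rw [if_pos hba, if_neg (not_lt.mpr hba.le)]
    omega
  | cons x l1 ih =>
    have hc : List.countP (fun y => decide (key y < key x)) (l1 ++ b :: a :: l2)
        = List.countP (fun y => decide (key y < key x)) (l1 ++ a :: b :: l2) := by
      simp only [List.countP_append, List.countP_cons]
      omega
    rw [List.cons_append, List.cons_append]
    simp only [inv]
    omega

variable [DecidableEq L]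

lemma pref_replicate {x : L} : ∀ (t : List L) (k : ℕ),
    List.Chain' (fun a b => key a ≤ key b) (x :: t) →
    (∀ p ∈ x :: t, ∀ q ∈ x :: t, key p = key q → p = q) →
    k ≤ t.count x → ∃ l2, t = List.replicate k x ++ l2 := by
  haveI : IsTrans L fun a b => key a ≤ key b := ⟨fun _ _ _ h1 h2 => le_trans h1 h2⟩
  intro t
  induction t with
  | nil => intro k _ _ hk; simp at hk; exact ⟨[], by simp [hk]⟩
  | cons b t ih =>
    intro k hch hinj hk
    match k, hk with
    | 0, _ => exact ⟨b :: t, rfl⟩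
    | k + 1, hk =>
      by_cases hbx : b = x
      · subst hbx
        have hch' : List.Chain' (fun a b => key a ≤ key b) (b :: t) := hch.tail
        have hinj' : ∀ p ∈ b :: t, ∀ q ∈ b :: t, key p = key q → p = q := by
          intro p hp q hq
          exact hinj p (List.mem_cons_of_mem _ hp) q (List.mem_cons_of_mem _ hq)
        have hk' : k ≤ t.count b := by
          simp only [List.count_cons, beq_self_eq_true, if_true] at hk; omega
        obtain ⟨l2, rfl⟩ := ih k hch' hinj' hk'
        exact ⟨l2, by rw [List.replicate_succ, List.cons_append]⟩
      · exfalso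
        have hcnt : 0 < t.count x := by
          simp only [List.count_cons] at hk
          rw [if_neg (by simpa using hbx)] at hk
          omega
        have hxt : x ∈ t := List.count_pos_iff.mp hcnt
        have h1 : key x ≤ key b := by
          rcases List.isChain_cons_cons.mp hch with ⟨h, _⟩; exact h
        have h2 : key b ≤ key x := by
          haveI : Trans (fun a b : L => key a ≤ key b) (fun a b : L => key a ≤ key b)
              (fun a b : L => key a ≤ key b) := ⟨fun h1 h2 => le_trans h1 h2⟩
          have hpw := (List.isChain_iff_pairwise.mp hch.tail)
          exact (List.pairwise_cons.mp hpw).1 x hxt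
        exact hbx (hinj b (by simp) x (by simp [hxt]) (le_antisymm h2 h1))

lemma grouped {x : L} : ∀ (t : List L) (n : ℕ),
    List.Chain' (fun a b => key a ≤ key b) t →
    (∀ p ∈ t, ∀ q ∈ t, key p = key q → p = q) →
    n ≤ t.count x →
    ∃ l1 l2, t = l1 ++ List.replicate n x ++ l2 := by
  intro t
  induction t with
  | nil => intro n _ _ hn; simp at hn; exact ⟨[], [], by simp [hn]⟩
  | cons a t ih =>
    intro n hch hinj hn
    match n, hn with
    | 0, _ => exact ⟨[], a :: t, rfl⟩
    | n + 1, hn =>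
      by_cases hax : a = x
      · subst hax
        have hk : n ≤ t.count a := by
          simp only [List.count_cons, beq_self_eq_true, if_true] at hn; omega
        obtain ⟨l2, rfl⟩ := pref_replicate key t n hch hinj hk
        exact ⟨[], l2, by rw [List.replicate_succ]; simp⟩
      · have hk : n + 1 ≤ t.count x := by
          simp only [List.count_cons] at hn
          rw [if_neg (by simpa using hax)] at hn
          omega
        have hinj' : ∀ p ∈ t, ∀ q ∈ t, key p = key q → p = q := by
          intro p hp q hq
          exact hinj p (List.mem_cons_of_mem _ hp) q (List.mem_cons_of_mem _ hq)
        obtain ⟨l1, l2, heq⟩ := ih (n + 1) hch.tail hinj' hk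
        exact ⟨a :: l1, l2, by simp [heq]⟩

end SortPart

lemma collect_to_sorted (key : L → ℕ) (S : Set L) (y : L) :
    ∀ (M : ℕ) (l : List L) (W : ℕ), l.length ^ 3 + inv key l ≤ M → WS S l W →
    lf y l ∈ Submodule.span ℤ
      {z | ∃ t, WS S t W ∧ List.Chain' (fun a b => key a ≤ key b) t ∧ lf y t = z} := by
  intro M
  induction M with
  | zero =>
    intro l W hM hWS
    have hl : l = [] := by
      have h3 : l.length ^ 3 = 0 := by omega
      have : l.length = 0 := by
        have := pow_eq_zero_iff (n := 3) (by norm_num) |>.mp h3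
        exact this
      exact List.eq_nil_of_length_eq_zero this
    subst hl
    exact Submodule.subset_span ⟨[], hWS, List.isChain_nil, rfl⟩
  | succ M ih =>
    intro l W hM hWS
    by_cases hch : List.Chain' (fun a b => key a ≤ key b) l
    · exact Submodule.subset_span ⟨l, hWS, hch, rfl⟩
    · obtain ⟨l1, a, b, l2, rfl, hba⟩ := exists_violation key hch
      have hid : lf y (l1 ++ a :: b :: l2)
          = lf y (l1 ++ b :: a :: l2) + lf y (l1 ++ ⁅a, b⁆ :: l2) := by
        rw [lf_append, lf_append, lf_append]
        simp only [lf_cons]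
        rw [lie_lie_swap, lf_add]
      obtain ⟨W1, W2, h1, h2, rfl⟩ := hWS.split
      obtain ⟨wa, W3, hwa, h3, rfl⟩ := h2.cons_inv
      obtain ⟨wb, W4, hwb, h4, rfl⟩ := h3.cons_inv
      have hWSswap : WS S (l1 ++ b :: a :: l2) (W1 + (wa + (wb + W4))) := by
        have h5 := h1.append (WS.cons hwb (WS.cons hwa h4))
        have he : W1 + (wb + (wa + W4)) = W1 + (wa + (wb + W4)) := by omega
        exact he ▸ h5
      have hWSbr : WS S (l1 ++ ⁅a, b⁆ :: l2) (W1 + (wa + (wb + W4))) := by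
        have h5 := h1.append (WS.cons (hwa.br hwb) h4)
        have he : W1 + (wa + wb + W4) = W1 + (wa + (wb + W4)) := by omega
        exact he ▸ h5
      have hlen : (l1 ++ b :: a :: l2).length = (l1 ++ a :: b :: l2).length := by simp
      have hm1 : (l1 ++ b :: a :: l2).length ^ 3 + inv key (l1 ++ b :: a :: l2) ≤ M := by
        have := inv_swap key hba l1 l2
        rw [hlen]
        omega
      have hm2 : (l1 ++ ⁅a, b⁆ :: l2).length ^ 3 + inv key (l1 ++ ⁅a, b⁆ :: l2) ≤ M := by
        have hil := inv_le_sq key (l1 ++ ⁅a, b⁆ :: l2)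
        set p := (l1 ++ ⁅a, b⁆ :: l2).length with hp
        have hl2 : p + 1 = (l1 ++ a :: b :: l2).length := by
          rw [hp]; simp only [List.length_append, List.length_cons]; omega
        rw [← hl2] at hM
        have h7 : p ^ 3 + p * p + 1 ≤ (p + 1) ^ 3 := by ring_nf; nlinarith
        omega
      rw [hid]
      exact add_mem (ih _ _ hm1 hWSswap) (ih _ _ hm2 hWSbr)

variable [DecidableEq L]

lemma sorted_vanish (S : Set L) (T : Finset L) (c n : ℕ) (key : L → ℕ)
    (hinjT : ∀ p ∈ T, ∀ q ∈ T, key p = key q → p = q)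
    (hmem : ∀ w x, CommW S w x → w ≤ c → x ∈ T)
    (hvan : ∀ w x, CommW S w x → c < w → x = 0)
    (hadn : ∀ x : L, IsLieCommOf S x → ∀ y : L, (fun z => ⁅z, x⁆)^[n] y = 0)
    {t : List L} {W : ℕ} (hWS : WS S t W)
    (hch : List.Chain' (fun a b => key a ≤ key b) t)
    (hW : c * T.card * (n - 1) < W) (y : L) : lf y t = 0 := by
  by_cases h0 : (0 : L) ∈ t
  · exact lf_zero_mem h0 y
  · have hnz : ∀ x ∈ t, x ≠ 0 := fun x hx he => h0 (he ▸ hx)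
    obtain ⟨hWlen, hmem'⟩ := hWS.bound hvan hnz
    have hTmem : ∀ x ∈ t, x ∈ T := fun x hx =>
      (hmem' x hx).elim fun w hw => hmem w x hw.2 hw.1
    have hlen : T.card * (n - 1) < t.length := by
      have hcl : c * T.card * (n - 1) < c * t.length := lt_of_lt_of_le hW hWlen
      rcases Nat.eq_zero_or_pos c with rfl | hc
      · simp at hcl
      · rw [mul_assoc] at hcl
        exact Nat.lt_of_mul_lt_mul_left hcl
    obtain ⟨x, hxcnt⟩ : ∃ x : L, n ≤ t.count x := by
      by_contra hc
      push_neg at hc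
      have he : t.length = ∑ x ∈ t.toFinset, t.count x :=
        (List.sum_toFinset_count_eq_length t).symm
      have hb : ∑ x ∈ t.toFinset, t.count x ≤ t.toFinset.card * (n - 1) := by
        calc ∑ x ∈ t.toFinset, t.count x ≤ ∑ _x ∈ t.toFinset, (n - 1) :=
              Finset.sum_le_sum fun x _ => by have := hc x; omega
          _ = t.toFinset.card * (n - 1) := by rw [Finset.sum_const, smul_eq_mul]
      have hsub : t.toFinset ⊆ T := fun x hx => hTmem x (List.mem_toFinset.mp hx)
      have hcard := Finset.card_le_card hsub
      have : t.length ≤ T.card * (n - 1) := by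
        calc t.length = ∑ x ∈ t.toFinset, t.count x := he
          _ ≤ t.toFinset.card * (n - 1) := hb
          _ ≤ T.card * (n - 1) := Nat.mul_le_mul_right _ hcard
      omega
    have hn1 : 1 ≤ n := by
      by_contra hn0
      have : n = 0 := by omega
      subst this
      simp only [Nat.zero_sub, Nat.mul_zero] at hW
      have : t ≠ [] := by
        intro he; subst he
        cases hWS
        omega
      obtain ⟨z, hz⟩ := List.exists_mem_of_ne_nil t this
      obtain ⟨w, _, hwz⟩ := hmem' z hz
      -- use ad-nilpotency of index 0: everything is 0
      exact absurd (hadn z hwz.isLieCommOf z) (by simpa using hnz z hz)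
    have hxt : x ∈ t := List.count_pos_iff.mp (by omega)
    obtain ⟨w, hwc, hwx⟩ := hmem' x hxt
    have hinj' : ∀ p ∈ t, ∀ q ∈ t, key p = key q → p = q := fun p hp q hq =>
      hinjT p (hTmem p hp) q (hTmem q hq)
    obtain ⟨l1, l2, heq⟩ := grouped key t n hch hinj' hxcnt
    rw [heq, lf_append, lf_append, lf_replicate, hadn x hwx.isLieCommOf, lf_zero]

lemma collect (S : Set L) (T : Finset L) (c n : ℕ) (key : L → ℕ)
    (hinjT : ∀ p ∈ T, ∀ q ∈ T, key p = key q → p = q)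
    (hmem : ∀ w x, CommW S w x → w ≤ c → x ∈ T)
    (hvan : ∀ w x, CommW S w x → c < w → x = 0)
    (hadn : ∀ x : L, IsLieCommOf S x → ∀ y : L, (fun z => ⁅z, x⁆)^[n] y = 0)
    (y : L) (l : List L) (W : ℕ) (hWS : WS S l W)
    (hW : c * T.card * (n - 1) < W) : lf y l = 0 := by
  have h1 := collect_to_sorted key S y (l.length ^ 3 + inv key l) l W le_rfl hWS
  have hsub : {z | ∃ t, WS S t W ∧ List.Chain' (fun a b => key a ≤ key b) t ∧ lf y t = z}
      ⊆ {(0 : L)} := by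
    rintro z ⟨t, ht, hch, rfl⟩
    exact sorted_vanish S T c n key hinjT hmem hvan hadn ht hch hW y
  have h2 := Submodule.span_mono hsub h1
  rw [Submodule.span_zero_singleton] at h2
  simpa using h2

/-- bound on number of commutator values -/
def g : ℕ → ℕ → ℕ
  | 0, m => m
  | k + 1, m => g k m + g k m * g k m

/-- finsets of commutator values of bounded depth -/
noncomputable def lieB {m : ℕ} (h : Fin m → L) : ℕ → Finset L
  | 0 => Finset.image h Finset.univ
  | k + 1 => lieB h k ∪ Finset.image₂ (fun a b => ⁅a, b⁆) (lieB h k) (lieB h k)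

lemma card_lieB {m : ℕ} (h : Fin m → L) : ∀ k, (lieB h k).card ≤ g k m
  | 0 => by
    simpa [lieB, g] using (Finset.card_image_le (s := (Finset.univ : Finset (Fin m))) (f := h))
  | k + 1 => by
    have h1 := card_lieB h k
    have h2 := Finset.card_union_le (lieB h k)
      (Finset.image₂ (fun a b => ⁅a, b⁆) (lieB h k) (lieB h k))
    have h3 := Finset.card_image₂_le (fun a b => ⁅a, b⁆) (lieB h k) (lieB h k)
    simp only [lieB, g]
    nlinarith

lemma lieB_mono {m : ℕ} (h : Fin m → L) : ∀ {j k : ℕ}, j ≤ k → lieB h j ⊆ lieB h k := by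
  intro j k hjk
  induction k with
  | zero => rw [Nat.le_zero.mp hjk]
  | succ k ih =>
    rcases Nat.lt_or_ge j (k + 1) with hj | hj
    · refine (ih (by omega)).trans ?_
      simp only [lieB]
      exact Finset.subset_union_left
    · rw [show j = k + 1 by omega]

lemma CommW.mem_lieB {m : ℕ} {h : Fin m → L} {w : ℕ} {x : L}
    (hx : CommW (Set.range h) w x) : ∀ k, w ≤ k + 1 → x ∈ lieB h k := by
  induction hx with
  | base x hxS =>
    intro k _
    refine lieB_mono h (Nat.zero_le k) ?_
    obtain ⟨i, rfl⟩ := hxS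
    simp [lieB]
  | @br a b p q hp hq ihp ihq =>
    intro k hk
    have ha := hp.one_le
    have hb := hq.one_le
    cases k with
    | zero => omega
    | succ k =>
      have h1 : p ∈ lieB h k := ihp k (by omega)
      have h2 : q ∈ lieB h k := ihq k (by omega)
      simp only [lieB]
      exact Finset.mem_union_right _ (Finset.mem_image₂_of_mem h1 h2)

lemma lcs_bracket {A : Type*} [LieRing A] :
    ∀ (i : ℕ) {j : ℕ} {p q : A}, p ∈ LieModule.lowerCentralSeries ℤ A A i →
      q ∈ LieModule.lowerCentralSeries ℤ A A j →
      ⁅p, q⁆ ∈ LieModule.lowerCentralSeries ℤ A A (i + j + 1) := by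
  intro i
  induction i with
  | zero =>
    intro j p q _ hq
    rw [show 0 + j + 1 = j + 1 by omega, LieModule.lowerCentralSeries_succ]
    exact LieSubmodule.lie_mem_lie (LieSubmodule.mem_top p) hq
  | succ i ih =>
    intro j p q hp hq
    rw [LieModule.lowerCentralSeries_succ] at hp
    rw [← LieSubmodule.mem_toSubmodule, LieSubmodule.lieIdeal_oper_eq_linear_span'] at hp
    have key : ∀ (j : ℕ) (q : A), q ∈ LieModule.lowerCentralSeries ℤ A A j →
        ⁅p, q⁆ ∈ LieModule.lowerCentralSeries ℤ A A (i + j + 2) := by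
      refine Submodule.span_induction
        (p := fun p _ => ∀ (j : ℕ) (q : A), q ∈ LieModule.lowerCentralSeries ℤ A A j →
          ⁅p, q⁆ ∈ LieModule.lowerCentralSeries ℤ A A (i + j + 2)) ?_ ?_ ?_ ?_ hp
      · rintro _ ⟨z, -, r, hr, rfl⟩ j q hq
        have h1 : ⁅r, q⁆ ∈ LieModule.lowerCentralSeries ℤ A A (i + j + 1) := ih hr hq
        have h2 : ⁅z, ⁅r, q⁆⁆ ∈ LieModule.lowerCentralSeries ℤ A A (i + j + 2) := by
          rw [show i + j + 2 = (i + j + 1) + 1 by omega, LieModule.lowerCentralSeries_succ]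
          exact LieSubmodule.lie_mem_lie (LieSubmodule.mem_top z) h1
        have h3 : ⁅z, q⁆ ∈ LieModule.lowerCentralSeries ℤ A A (j + 1) := by
          rw [LieModule.lowerCentralSeries_succ]
          exact LieSubmodule.lie_mem_lie (LieSubmodule.mem_top z) hq
        have h4 : ⁅r, ⁅z, q⁆⁆ ∈ LieModule.lowerCentralSeries ℤ A A (i + j + 2) := by
          have h5 := ih hr h3
          rw [show i + (j + 1) + 1 = i + j + 2 by omega] at h5
          exact h5
        have hid : ⁅⁅z, r⁆, q⁆ = ⁅z, ⁅r, q⁆⁆ - ⁅r, ⁅z, q⁆⁆ :=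
          eq_sub_of_add_eq (leibniz_lie z r q).symm
        rw [hid]
        exact sub_mem h2 h4
      · intro j q _
        rw [zero_lie]
        exact zero_mem _
      · intro a b _ _ ha hb j q hq
        rw [add_lie]
        exact add_mem (ha j q hq) (hb j q hq)
      · intro t a _ ha j q hq
        rw [smul_lie]
        exact Submodule.smul_mem _ t (ha j q hq)
    have h6 := key j q hq
    rw [show i + 1 + j + 1 = i + j + 2 by omega]
    exact h6

lemma commW_mem_lcs {S : Set L} {w : ℕ} {x : L} (h : CommW S w x) :
    ∃ (hx : x ∈ LieSubalgebra.lieSpan ℤ L S),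
      (⟨x, hx⟩ : LieSubalgebra.lieSpan ℤ L S) ∈
        LieModule.lowerCentralSeries ℤ (LieSubalgebra.lieSpan ℤ L S)
          (LieSubalgebra.lieSpan ℤ L S) (w - 1) := by
  induction h with
  | base x hx =>
    exact ⟨LieSubalgebra.subset_lieSpan hx, by
      rw [show (1 : ℕ) - 1 = 0 from rfl, LieModule.lowerCentralSeries_zero]
      exact LieSubmodule.mem_top _⟩
  | @br a b p q hp hq ihp ihq =>
    obtain ⟨hpm, hP⟩ := ihp
    obtain ⟨hqm, hQ⟩ := ihq
    refine ⟨(LieSubalgebra.lieSpan ℤ L S).lie_mem hpm hqm, ?_⟩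
    have h1 := lcs_bracket (a - 1) hP hQ
    have harith : a - 1 + (b - 1) + 1 = a + b - 1 := by
      have := hp.one_le; have := hq.one_le; omega
    rw [harith] at h1
    exact h1

lemma commW_eq_zero {S : Set L} {c : ℕ}
    (hnil : LieModule.lowerCentralSeries ℤ (LieSubalgebra.lieSpan ℤ L S)
      (LieSubalgebra.lieSpan ℤ L S) c = ⊥)
    {w : ℕ} {x : L} (h : CommW S w x) (hw : c < w) : x = 0 := by
  obtain ⟨hx, hm⟩ := commW_mem_lcs h
  have hle := LieModule.antitone_lowerCentralSeries ℤ
    (LieSubalgebra.lieSpan ℤ L S) (LieSubalgebra.lieSpan ℤ L S) (show c ≤ w - 1 by omega)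
  rw [hnil] at hle
  have h0 := (LieSubmodule.mem_bot _).mp (hle hm)
  exact Subtype.ext_iff.mp h0

lemma lieSpan_le_span (S : Set L) {x : L} (hx : x ∈ LieSubalgebra.lieSpan ℤ L S) :
    x ∈ Submodule.span ℤ {z | ∃ w, CommW S w z} := by
  let K : LieSubalgebra ℤ L :=
    { Submodule.span ℤ {z | ∃ w, CommW S w z} with
      lie_mem' := fun {p q} hp hq => by
        have h1 := lie_mem_span_span (A := {z | ∃ w, CommW S w z})
          (B := {z | ∃ w, CommW S w z}) hp hq
        refine Submodule.span_mono ?_ h1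
        rintro z ⟨a, ⟨wa, hwa⟩, b, ⟨wb, hwb⟩, rfl⟩
        exact ⟨wa + wb, hwa.br hwb⟩ }
  have hle : LieSubalgebra.lieSpan ℤ L S ≤ K :=
    (LieSubalgebra.lieSpan_le).mpr fun z hz =>
      Submodule.subset_span ⟨1, CommW.base z hz⟩
  exact hle hx

lemma expand (S : Set L) (y : L) : ∀ (l : List L),
    (∀ x ∈ l, x ∈ Submodule.span ℤ {z | ∃ w, CommW S w z}) →
    lf y l ∈ Submodule.span ℤ
      {z | ∃ t W, WS S t W ∧ t.length = l.length ∧ lf y t = z} := by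
  intro l
  induction l using List.reverseRecOn with
  | nil => intro _; exact Submodule.subset_span ⟨[], 0, WS.nil, rfl, rfl⟩
  | append_singleton l a ih =>
    intro hmem
    have h1 := ih fun x hx => hmem x (by simp [hx])
    have h2 := hmem a (by simp)
    rw [lf_append]
    show ⁅lf y l, a⁆ ∈ _
    have h3 := lie_mem_span_span h1 h2
    refine Submodule.span_mono ?_ h3
    rintro z ⟨p, ⟨t, W, hWS, hlen, rfl⟩, b, ⟨w, hw⟩, rfl⟩
    refine ⟨t ++ [b], W + (w + 0), hWS.append (WS.cons hw WS.nil), by simp [hlen], ?_⟩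
    rw [lf_append]
    rfl

end EngelSink

/-- Let `L` be a Lie ring and `H` a subring generated by `m` elements such that
every Lie commutator in the generators is ad-nilpotent in `L` of index at most
`n`.  If `H` is nilpotent of class `c` then `[L, H, ..., H] = 0` with `u`
copies of `H`, where `u` is bounded in terms of `c`, `m`, `n` only. -/
theorem lie_ring_engel_sink :
    ∃ f : ℕ → ℕ → ℕ → ℕ,
      ∀ (L : Type*) [LieRing L], ∀ (c m n : ℕ) (h : Fin m → L),
        (∀ x : L, IsLieCommOf (Set.range h) x →
          ∀ y : L, (fun z => ⁅z, x⁆)^[n] y = 0) →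
        LieModule.lowerCentralSeries ℤ
            (LieSubalgebra.lieSpan ℤ L (Set.range h))
            (LieSubalgebra.lieSpan ℤ L (Set.range h)) c = ⊥ →
        ∀ (y : L) (hs : Fin (f c m n) → L),
          (∀ i, hs i ∈ LieSubalgebra.lieSpan ℤ L (Set.range h)) →
          (List.ofFn hs).foldl (fun z w => ⁅z, w⁆) y = 0 := by
  classical
  refine ⟨fun c m n => c * EngelSink.g c m * (n - 1) + 1, ?_⟩
  intro L _ c m n h hadn hnil y hs hmem
  letI : DecidableEq L := Classical.decEq L
  set S : Set L := Set.range h with hS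
  set T : Finset L := EngelSink.lieB h c with hT
  set key : L → ℕ := fun x => T.toList.idxOf x with hkey
  have hinjT : ∀ p ∈ T, ∀ q ∈ T, key p = key q → p = q := by
    intro p hp q hq hpq
    exact (List.idxOf_inj (y := q) (Finset.mem_toList.mpr hp)).mp hpq
  have hmemT : ∀ w x, EngelSink.CommW S w x → w ≤ c → x ∈ T := by
    intro w x hx hwc
    have h1 := hx.one_le
    exact hx.mem_lieB c (by omega)
  have hvan : ∀ w x, EngelSink.CommW S w x → c < w → x = 0 := fun w x hx hc =>
    EngelSink.commW_eq_zero hnil hx hc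
  show EngelSink.lf y (List.ofFn hs) = 0
  have hexp := EngelSink.expand S y (List.ofFn hs) ?_
  · have hz : {z | ∃ t W, EngelSink.WS S t W ∧ t.length = (List.ofFn hs).length ∧
        EngelSink.lf y t = z} ⊆ {(0 : L)} := by
      rintro z ⟨t, W, hWS, hlen, rfl⟩
      refine Set.mem_singleton_iff.mpr
        (EngelSink.collect S T c n key hinjT hmemT hvan hadn y t W hWS ?_)
      have h1 := hWS.length_le
      have h2 : t.length = c * EngelSink.g c m * (n - 1) + 1 := by rw [hlen]; simp
      have h3 : T.card ≤ EngelSink.g c m := EngelSink.card_lieB h c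
      have h4 : c * T.card * (n - 1) ≤ c * EngelSink.g c m * (n - 1) :=
        Nat.mul_le_mul_right _ (Nat.mul_le_mul_left _ h3)
      omega
    have h5 := Submodule.span_mono hz hexp
    rw [Submodule.span_zero_singleton] at h5
    simpa using h5
  · intro x hx
    obtain ⟨i, rfl⟩ := List.mem_ofFn.mp hx
    exact EngelSink.lieSpan_le_span S (hmem i)
end
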